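/- arXiv:1204.5062 — 8 statements merged into one kernel-verified Lean document; each statement's English description precedes it below -/
import Mathlib

section
/- Let Φ be a frame for 𝕂^n (𝕂 = ℝ or ℂ) consisting of m vectors, i.e., a matrix Φ ∈ 𝕂^{n×m} of rank n. Then there exists a dual frame Ψ of Φ (a matrix Ψ ∈ 𝕂^{n×m} with Ψ Φ* = I_n) such that ‖Ψ‖₀ ≤ n², i.e., Ψ has at most n² non-vanishing entries. -/
open Matrix

/-- The number of non-vanishing entries of a matrix (the `ℓ₀`-"norm"). -/
noncomputable def l0Norm {𝕂 : Type} [RCLike 𝕂] {n m : ℕ}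
    (Ψ : Matrix (Fin n) (Fin m) 𝕂) : ℕ :=
  Set.ncard {p : Fin n × Fin m | Ψ p.1 p.2 ≠ 0}

/-- Any frame `Φ` for `𝕂^n` (a rank-`n` matrix in `𝕂^{n×m}`) has a dual
frame `Ψ` (i.e. `Ψ Φ* = I_n`) with at most `n²` non-vanishing entries. -/
theorem exists_sparse_dual {𝕂 : Type} [RCLike 𝕂] {n m : ℕ}
    (Φ : Matrix (Fin n) (Fin m) 𝕂) (hΦ : Φ.rank = n) :
    ∃ Ψ : Matrix (Fin n) (Fin m) 𝕂, Ψ * Φᴴ = 1 ∧ l0Norm Ψ ≤ n ^ 2 := by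
  classical
  -- columns of Φ
  set c : Fin m → (Fin n → 𝕂) := fun j => Φᵀ j with hc
  -- the columns span everything
  have hspan : Submodule.span 𝕂 (Set.range c) = ⊤ := by
    apply Submodule.eq_top_of_finrank_eq
    change Module.finrank 𝕂 (Submodule.span 𝕂 (Set.range Φ.col)) = _
    rw [← Matrix.rank_eq_finrank_span_cols, hΦ, Module.finrank_fintype_fun_eq_card,
      Fintype.card_fin]
  obtain ⟨b, hbsub, hbspan, hbind⟩ := exists_linearIndependent 𝕂 (Set.range c)
  rw [hspan] at hbspan
  have hfin : b.Finite := hbind.setFinite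
  have : Fintype b := hfin.fintype
  -- b is a basis, so it has cardinality n
  let B : Module.Basis b 𝕂 (Fin n → 𝕂) := Module.Basis.mk hbind (by rw [Subtype.range_coe]; rw [hbspan])
  have hcard : Fintype.card b = n := by
    rw [← Module.finrank_eq_card_basis B, Module.finrank_fintype_fun_eq_card, Fintype.card_fin]
  let e : Fin n ≃ b := (Fintype.equivFinOfCardEq hcard).symm
  -- choose column indices realizing the basis
  have hpre : ∀ k : Fin n, ∃ j : Fin m, c j = (e k : Fin n → 𝕂) := fun k =>
    hbsub (e k).2
  choose f hf using hpre
  -- the selected square submatrix is invertible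
  set A : Matrix (Fin n) (Fin n) 𝕂 := Φ.submatrix id f with hA
  have hAcols : ∀ k, Aᵀ k = c (f k) := fun k => rfl
  have hAunit : IsUnit A := by
    rw [← Matrix.linearIndependent_cols_iff_isUnit]
    have : (fun k => Aᵀ k) = Subtype.val ∘ (e : Fin n → b) := by
      funext k; rw [hAcols, hf]; rfl
    change LinearIndependent 𝕂 (fun k => Aᵀ k)
    rw [this]
    exact hbind.comp _ e.injective
  have hAHunit : IsUnit Aᴴ := by
    rwa [Matrix.isUnit_conjTranspose]
  set C : Matrix (Fin n) (Fin n) 𝕂 := (Aᴴ)⁻¹ with hC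
  have hCA : C * Aᴴ = 1 := Matrix.nonsing_inv_mul _ (Matrix.isUnit_iff_isUnit_det _ |>.mp hAHunit)
  -- define the sparse dual
  set Ψ : Matrix (Fin n) (Fin m) 𝕂 :=
    fun i j => ∑ k : Fin n, if j = f k then C i k else 0 with hΨ
  refine ⟨Ψ, ?_, ?_⟩
  · ext i l
    have : (Ψ * Φᴴ) i l = ∑ k : Fin n, C i k * Φᴴ (f k) l := by
      rw [Matrix.mul_apply]
      simp only [Matrix.mul_apply, hΨ, Finset.sum_mul, ite_mul, zero_mul]
      rw [Finset.sum_comm]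
      refine Finset.sum_congr rfl fun k _ => ?_
      rw [Finset.sum_ite_eq' Finset.univ (f k) (fun j => C i k * Φᴴ j l)]
      simp
    rw [this]
    have : ∑ k : Fin n, C i k * Φᴴ (f k) l = (C * Aᴴ) i l := by
      simp [Matrix.mul_apply, hA, Matrix.conjTranspose_apply, Matrix.submatrix_apply]
    rw [this, hCA]
  · -- sparsity
    unfold l0Norm
    have hsub : {p : Fin n × Fin m | Ψ p.1 p.2 ≠ 0} ⊆
        (fun q : Fin n × Fin n => (q.1, f q.2)) '' Set.univ := by
      rintro ⟨i, j⟩ hp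
      simp only [Set.mem_setOf_eq] at hp
      by_contra hmem
      apply hp
      rw [hΨ]
      apply Finset.sum_eq_zero
      intro k _
      rw [if_neg]
      intro hjk
      exact hmem ⟨(i, k), Set.mem_univ _, by simp [hjk]⟩
    calc Set.ncard {p : Fin n × Fin m | Ψ p.1 p.2 ≠ 0}
        ≤ Set.ncard ((fun q : Fin n × Fin n => (q.1, f q.2)) '' Set.univ) :=
          Set.ncard_le_ncard hsub ((Set.finite_univ.image _))
      _ ≤ Set.ncard (Set.univ : Set (Fin n × Fin n)) := Set.ncard_image_le Set.finite_univ
      _ = n ^ 2 := by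
          rw [Set.ncard_univ, Nat.card_eq_fintype_card, Fintype.card_prod, Fintype.card_fin,
            sq]
end

section
/- Let Φ be a frame for 𝕂^n with m vectors. Then every dual frame Ψ of Φ satisfies ‖Ψ‖₀ ≥ Σ_{j=1}^n spark(Φ^(j)), where Φ^(j) is the (n−1)×m matrix obtained from Φ by deleting the j-th row. -/
open Matrix

/-- The submatrix of `Φ` obtained by deleting the `j`-th row. -/
def deleteRow {𝕂 : Type} [RCLike 𝕂] {n m : ℕ}
    (Φ : Matrix (Fin n) (Fin m) 𝕂) (j : Fin n) :
    Matrix {i : Fin n // i ≠ j} (Fin m) 𝕂 :=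
  fun i k => Φ i.1 k

/-- The spark of a matrix: the smallest number of linearly dependent columns;
if all columns are linearly independent it is set to `m + 1`. -/
noncomputable def spark {𝕂 : Type} [RCLike 𝕂] {l : Type} {m : ℕ}
    (M : Matrix l (Fin m) 𝕂) : ℕ :=
  sInf (insert (m + 1)
    {c | ∃ S : Finset (Fin m), S.card = c ∧
      ¬ LinearIndependent 𝕂 (fun i : S => fun r => M r (i : Fin m))})

/-- The `ℓ₀`-norm is the sum over rows of the number of nonzero entries. -/
theorem l0Norm_eq_sum_rows {𝕂 : Type} [RCLike 𝕂] {n m : ℕ}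
    (Ψ : Matrix (Fin n) (Fin m) 𝕂) :
    l0Norm Ψ = ∑ j : Fin n, (Finset.univ.filter (fun k => Ψ j k ≠ 0)).card := by
  classical
  rw [l0Norm, Set.ncard_eq_toFinset_card']
  have h : {p : Fin n × Fin m | Ψ p.1 p.2 ≠ 0}.toFinset
      = Finset.univ.filter (fun p : Fin n × Fin m => Ψ p.1 p.2 ≠ 0) := by
    ext p; simp
  rw [h, Finset.card_eq_sum_card_fiberwise (f := Prod.fst) (t := Finset.univ)
    (fun p _ => Finset.mem_univ _)]
  refine Finset.sum_congr rfl fun j _ => ?_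
  refine Finset.card_nbij' (fun p => p.2) (fun k => (j, k)) ?_ ?_ ?_ ?_ <;>
    simp +contextual [Finset.mem_filter, Set.MapsTo, Set.LeftInvOn, Set.RightInvOn]
  intro p k h1 h2; subst h2; exact h1

/-- The spark of `deleteRow Φ j` is at most the number of nonzero entries in
row `j` of any dual frame. -/
theorem spark_deleteRow_le {𝕂 : Type} [RCLike 𝕂] {n m : ℕ}
    (Φ : Matrix (Fin n) (Fin m) 𝕂)
    (Ψ : Matrix (Fin n) (Fin m) 𝕂) (hΨ : Ψ * Φᴴ = 1) (j : Fin n) :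
    spark (deleteRow Φ j) ≤ (Finset.univ.filter (fun k => Ψ j k ≠ 0)).card := by
  classical
  set Sj := Finset.univ.filter (fun k => Ψ j k ≠ 0) with hSj
  have hentry : ∀ i : Fin n, ∑ k, Ψ j k * (starRingEnd 𝕂) (Φ i k) = if j = i then 1 else 0 := by
    intro i
    have := congrFun (congrFun hΨ j) i
    simpa [Matrix.mul_apply, Matrix.conjTranspose_apply, Matrix.one_apply] using this
  have hne : Sj.Nonempty := by
    by_contra h
    rw [Finset.not_nonempty_iff_eq_empty] at h
    have h1 := hentry j
    simp only [if_pos rfl] at h1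
    have : ∀ k, Ψ j k = 0 := by
      intro k
      by_contra hk
      have : k ∈ Sj := by simp [hSj, hk]
      simp [h] at this
    simp [this] at h1
  obtain ⟨k0, hk0⟩ := hne
  apply Nat.sInf_le
  right
  refine ⟨Sj, rfl, ?_⟩
  rw [Fintype.not_linearIndependent_iff]
  refine ⟨fun i => (starRingEnd 𝕂) (Ψ j i), ?_, ⟨k0, hk0⟩, ?_⟩
  · funext r
    have h0 : ∑ k, (starRingEnd 𝕂) (Ψ j k) * Φ r.1 k = 0 := by
      have := hentry r.1
      rw [if_neg (fun h => r.2 h.symm)] at this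
      have := congrArg (starRingEnd 𝕂) this
      simpa [map_sum, mul_comm] using this
    have hsub : ∑ i : Sj, (starRingEnd 𝕂) (Ψ j i) * Φ r.1 i
        = ∑ k ∈ Sj, (starRingEnd 𝕂) (Ψ j k) * Φ r.1 k := by
      rw [← Finset.sum_attach Sj (fun k => (starRingEnd 𝕂) (Ψ j k) * Φ r.1 k)]; rfl
    have hfull : ∑ k ∈ Sj, (starRingEnd 𝕂) (Ψ j k) * Φ r.1 k
        = ∑ k, (starRingEnd 𝕂) (Ψ j k) * Φ r.1 k := by
      apply Finset.sum_subset (Finset.subset_univ _)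
      intro k _ hk
      simp [hSj] at hk
      simp [hk]
    have := hsub.trans (hfull.trans h0)
    simpa [deleteRow, Finset.sum_apply, Pi.smul_apply, smul_eq_mul] using this
  · simp only [hSj, Finset.mem_filter] at hk0
    simpa using hk0.2

/-- Every dual frame `Ψ` of a frame `Φ` for `𝕂^n` satisfies
`‖Ψ‖₀ ≥ ∑_{j=1}^n spark(Φ^(j))`. -/
theorem dual_l0Norm_ge_sum_spark {𝕂 : Type} [RCLike 𝕂] {n m : ℕ}
    (Φ : Matrix (Fin n) (Fin m) 𝕂) (hΦ : Φ.rank = n)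
    (Ψ : Matrix (Fin n) (Fin m) 𝕂) (hΨ : Ψ * Φᴴ = 1) :
    ∑ j : Fin n, spark (deleteRow Φ j) ≤ l0Norm Ψ := by
  rw [l0Norm_eq_sum_rows]
  exact Finset.sum_le_sum fun j _ => spark_deleteRow_le Φ Ψ hΨ j
end

section
/- Let Φ be a frame for 𝕂^n with m vectors. Then the minimum of ‖Ψ‖₀ over all dual frames Ψ of Φ equals Σ_{j=1}^n spark_j(Φ), where spark_j(Φ) is the smallest cardinality of a set S of column indices such that the columns of Φ^(j) indexed by S are linearly dependent while the columns of Φ indexed by S are linearly independent. -/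
open Matrix

/-- `spark_j(Φ)`: the smallest cardinality of a set `S` of column indices such that the
columns of `Φ^(j)` indexed by `S` are linearly dependent while the columns of `Φ`
indexed by `S` are linearly independent. -/
noncomputable def sparkJ {𝕂 : Type} [RCLike 𝕂] {n m : ℕ}
    (Φ : Matrix (Fin n) (Fin m) 𝕂) (j : Fin n) : ℕ :=
  sInf {c | ∃ S : Finset (Fin m), S.card = c ∧
    ¬ LinearIndependent 𝕂 (fun i : S => fun r => deleteRow Φ j r (i : Fin m)) ∧
    LinearIndependent 𝕂 (fun i : S => fun r => Φ r (i : Fin m))}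

section Aux

variable {𝕂 : Type} [RCLike 𝕂] {n m : ℕ}

lemma sum_subtype_mul (S : Finset (Fin m)) (x : Fin m → 𝕂)
    (hx : ∀ l, x l ≠ 0 → l ∈ S) (w : Fin m → 𝕂) :
    ∑ i : S, x (i : Fin m) * w (i : Fin m) = ∑ l, x l * w l := by
  rw [Finset.sum_coe_sort S (fun l => x l * w l)]
  apply Finset.sum_subset S.subset_univ
  intro l _ hl
  have : x l = 0 := by by_contra h; exact hl (hx l h)
  rw [this, zero_mul]

lemma dep_iff {ι : Type} [Fintype ι] (A : Matrix ι (Fin m) 𝕂) (S : Finset (Fin m)) :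
    ¬ LinearIndependent 𝕂 (fun i : S => fun r : ι => A r (i : Fin m)) ↔
      ∃ x : Fin m → 𝕂, x ≠ 0 ∧ (∀ l, x l ≠ 0 → l ∈ S) ∧ A.mulVec x = 0 := by
  classical
  rw [Fintype.not_linearIndependent_iff]
  constructor
  · rintro ⟨g, hg, i₀, hi₀⟩
    set x : Fin m → 𝕂 := fun l => if h : l ∈ S then g ⟨l, h⟩ else 0 with hxdef
    have hxS : ∀ l, x l ≠ 0 → l ∈ S := by
      intro l hl; by_contra h; exact hl (dif_neg h)
    have hxg : ∀ i : S, x (i : Fin m) = g i := by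
      intro i; simp only [hxdef, dif_pos i.2]
    refine ⟨x, ?_, hxS, ?_⟩
    · intro h0
      apply hi₀
      rw [← hxg i₀, h0]; rfl
    · funext r
      have hgr := congr_fun hg r
      simp only [Finset.sum_apply, Pi.smul_apply, smul_eq_mul, Pi.zero_apply] at hgr
      have key : ∑ i : S, x (i : Fin m) * A r (i : Fin m) = ∑ l, x l * A r l :=
        sum_subtype_mul S x hxS _
      have h1 : ∑ i : S, x (i : Fin m) * A r (i : Fin m)
          = ∑ i : S, g i * A r (i : Fin m) :=
        Finset.sum_congr rfl (fun i _ => by rw [hxg i])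
      have h2 : ∑ l, x l * A r l = 0 := by rw [← key, h1]; exact hgr
      simp only [Matrix.mulVec, dotProduct, Pi.zero_apply]
      rw [← h2]
      exact Finset.sum_congr rfl (fun l _ => mul_comm _ _)
  · rintro ⟨x, hx0, hxS, hAx⟩
    obtain ⟨l₀, hl₀⟩ := Function.ne_iff.mp hx0
    refine ⟨fun i => x (i : Fin m), ?_, ⟨⟨l₀, hxS l₀ hl₀⟩, hl₀⟩⟩
    funext r
    have key : ∑ i : S, x (i : Fin m) * A r (i : Fin m) = ∑ l, x l * A r l :=
      sum_subtype_mul S x hxS _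
    have hAr := congr_fun hAx r
    simp only [Matrix.mulVec, dotProduct, Pi.zero_apply] at hAr
    simp only [Finset.sum_apply, Pi.smul_apply, smul_eq_mul, Pi.zero_apply]
    rw [key, ← hAr]
    exact Finset.sum_congr rfl (fun l _ => mul_comm _ _)

lemma indep_iff {ι : Type} [Fintype ι] (A : Matrix ι (Fin m) 𝕂) (S : Finset (Fin m)) :
    LinearIndependent 𝕂 (fun i : S => fun r : ι => A r (i : Fin m)) ↔
      ∀ x : Fin m → 𝕂, (∀ l, x l ≠ 0 → l ∈ S) → A.mulVec x = 0 → x = 0 := by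
  constructor
  · intro h x hxS hAx
    by_contra hx0
    exact (dep_iff A S).mpr ⟨x, hx0, hxS, hAx⟩ h
  · intro h
    by_contra hdep
    obtain ⟨x, hx0, hxS, hAx⟩ := (dep_iff A S).mp hdep
    exact hx0 (h x hxS hAx)

lemma deleteRow_mulVec_eq_zero_iff (Φ : Matrix (Fin n) (Fin m) 𝕂) (j : Fin n)
    (x : Fin m → 𝕂) :
    (deleteRow Φ j).mulVec x = 0 ↔ ∀ r, r ≠ j → Φ.mulVec x r = 0 := by
  constructor
  · intro h r hr; exact congr_fun h ⟨r, hr⟩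
  · intro h; funext i; exact h i.1 i.2

/-- The defining set of `sparkJ`. -/
def sparkSet (Φ : Matrix (Fin n) (Fin m) 𝕂) (j : Fin n) : Set ℕ :=
  {c | ∃ S : Finset (Fin m), S.card = c ∧
    ¬ LinearIndependent 𝕂 (fun i : S => fun r => deleteRow Φ j r (i : Fin m)) ∧
    LinearIndependent 𝕂 (fun i : S => fun r => Φ r (i : Fin m))}

lemma sparkJ_eq (Φ : Matrix (Fin n) (Fin m) 𝕂) (j : Fin n) :
    sparkJ Φ j = sInf (sparkSet Φ j) := rfl

lemma single_ne_zero' (j : Fin n) : (Pi.single j 1 : Fin n → 𝕂) ≠ 0 := by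
  intro h
  have := congr_fun h j
  simp at this

lemma exists_spark_le (Φ : Matrix (Fin n) (Fin m) 𝕂) (j : Fin n) :
    ∀ (N : ℕ) (x : Fin m → 𝕂), Φ.mulVec x = Pi.single j 1 → {l | x l ≠ 0}.ncard ≤ N →
      ∃ c ∈ sparkSet Φ j, c ≤ {l | x l ≠ 0}.ncard := by
  intro N
  induction N with
  | zero =>
    intro x hx hcard
    exfalso
    have hempty : {l | x l ≠ 0} = ∅ :=
      (Set.ncard_eq_zero (Set.toFinite _)).mp (Nat.le_zero.mp hcard)
    have hx0 : x = 0 := by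
      funext l
      by_contra h
      exact absurd hempty (Set.nonempty_iff_ne_empty.mp ⟨l, h⟩)
    rw [hx0, Matrix.mulVec_zero] at hx
    exact single_ne_zero' j hx.symm
  | succ N ih =>
    intro x hx hcard
    classical
    have hfin : {l | x l ≠ 0}.Finite := Set.toFinite _
    set S : Finset (Fin m) := hfin.toFinset with hSdef
    have hmemS : ∀ l, x l ≠ 0 → l ∈ S := fun l hl => hfin.mem_toFinset.mpr hl
    have hScard : S.card = {l | x l ≠ 0}.ncard := (Set.ncard_eq_toFinset_card _ hfin).symm
    have hx0 : x ≠ 0 := by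
      intro h
      rw [h, Matrix.mulVec_zero] at hx
      exact single_ne_zero' j hx.symm
    by_cases hind : LinearIndependent 𝕂 (fun i : S => fun r => Φ r (i : Fin m))
    · refine ⟨S.card, ⟨S, rfl, ?_, hind⟩, le_of_eq hScard⟩
      rw [dep_iff]
      refine ⟨x, hx0, hmemS, ?_⟩
      rw [deleteRow_mulVec_eq_zero_iff]
      intro r hr
      rw [hx]
      exact Pi.single_eq_of_ne hr 1
    · obtain ⟨d, hd0, hdS, hΦd⟩ := (dep_iff Φ S).mp hind
      obtain ⟨l, hl⟩ := Function.ne_iff.mp hd0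
      have hxl : x l ≠ 0 := hfin.mem_toFinset.mp (hdS l hl)
      set x' : Fin m → 𝕂 := x - (x l / d l) • d with hx'def
      have hx'sol : Φ.mulVec x' = Pi.single j 1 := by
        rw [hx'def, Matrix.mulVec_sub, Matrix.mulVec_smul, hΦd, smul_zero, sub_zero, hx]
      have hx'l : x' l = 0 := by
        simp only [hx'def, Pi.sub_apply, Pi.smul_apply, smul_eq_mul]
        rw [div_mul_cancel₀ _ hl, sub_self]
      have hsub : {r | x' r ≠ 0} ⊆ {r | x r ≠ 0} \ {l} := by
        intro r hr
        refine ⟨?_, ?_⟩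
        · by_contra hxr
          simp only [Set.mem_setOf_eq, not_not] at hxr
          have hdr : d r = 0 := by
            by_contra hdr
            exact (hfin.mem_toFinset.mp (hdS r hdr)) hxr
          have : x' r = 0 := by
            simp only [hx'def, Pi.sub_apply, Pi.smul_apply, smul_eq_mul, hxr, hdr,
              mul_zero, sub_zero]
          exact hr this
        · intro hrl
          rw [Set.mem_singleton_iff] at hrl
          subst hrl
          exact hr hx'l
      have hlt : {r | x' r ≠ 0}.ncard < {l | x l ≠ 0}.ncard :=
        lt_of_le_of_lt (Set.ncard_le_ncard hsub ((Set.toFinite _).diff))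
          (Set.ncard_diff_singleton_lt_of_mem hxl hfin)
      obtain ⟨c, hc, hcle⟩ := ih x' hx'sol (Nat.lt_succ_iff.mp (lt_of_lt_of_le hlt hcard))
      exact ⟨c, hc, hcle.trans hlt.le⟩

lemma row_isLeast (Φ : Matrix (Fin n) (Fin m) 𝕂) (hΦ : Φ.rank = n) (j : Fin n) :
    IsLeast {c | ∃ x : Fin m → 𝕂,
      Φ.mulVec x = Pi.single j 1 ∧ {l | x l ≠ 0}.ncard = c} (sparkJ Φ j) := by
  have hsurj : ∃ x : Fin m → 𝕂, Φ.mulVec x = Pi.single j 1 := by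
    have hrange : LinearMap.range Φ.mulVecLin = ⊤ := by
      apply Submodule.eq_top_of_finrank_eq
      rw [Module.finrank_pi, Fintype.card_fin]
      exact hΦ
    have : (Pi.single j 1 : Fin n → 𝕂) ∈ LinearMap.range Φ.mulVecLin := by
      rw [hrange]; trivial
    obtain ⟨x, hxeq⟩ := this
    exact ⟨x, by rw [← Matrix.mulVecLin_apply, hxeq]⟩
  obtain ⟨x₀, hx₀⟩ := hsurj
  obtain ⟨c₀, hc₀, _⟩ := exists_spark_le Φ j _ x₀ hx₀ le_rfl
  have hne : (sparkSet Φ j).Nonempty := ⟨c₀, hc₀⟩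
  have hmem : sInf (sparkSet Φ j) ∈ sparkSet Φ j := Nat.sInf_mem hne
  constructor
  · obtain ⟨S, hScard, hdep, hindS⟩ := hmem
    obtain ⟨d, hd0, hdS, hdel⟩ := (dep_iff _ S).mp hdep
    rw [deleteRow_mulVec_eq_zero_iff] at hdel
    have hαne : Φ.mulVec d j ≠ 0 := by
      intro hα
      apply hd0
      apply (indep_iff Φ S).mp hindS d hdS
      funext r
      by_cases hr : r = j
      · subst hr; exact hα
      · exact hdel r hr
    set z : Fin m → 𝕂 := (Φ.mulVec d j)⁻¹ • d with hzdef
    have hz : Φ.mulVec z = Pi.single j 1 := by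
      rw [hzdef, Matrix.mulVec_smul]
      funext k
      by_cases hk : k = j
      · subst hk
        simp only [Pi.smul_apply, smul_eq_mul, Pi.single_eq_same]
        exact inv_mul_cancel₀ hαne
      · simp only [Pi.smul_apply, smul_eq_mul]
        rw [hdel k hk, mul_zero, Pi.single_eq_of_ne hk]
    have hzS : ∀ l, z l ≠ 0 → l ∈ S := by
      intro l hl
      apply hdS
      intro hdl
      apply hl
      simp [hzdef, hdl]
    have hle : {l | z l ≠ 0}.ncard ≤ sparkJ Φ j := by
      rw [sparkJ_eq, ← hScard, ← Set.ncard_coe_finset]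
      exact Set.ncard_le_ncard (fun l hl => hzS l hl) S.finite_toSet
    have hge : sparkJ Φ j ≤ {l | z l ≠ 0}.ncard := by
      obtain ⟨c, hc, hcle⟩ := exists_spark_le Φ j _ z hz le_rfl
      exact le_trans (Nat.sInf_le hc) hcle
    exact ⟨z, hz, le_antisymm hle hge⟩
  · rintro c ⟨x, hx, rfl⟩
    obtain ⟨c', hc', hcle⟩ := exists_spark_le Φ j _ x hx le_rfl
    exact le_trans (Nat.sInf_le hc') hcle

lemma l0Norm_eq_sum (Ψ : Matrix (Fin n) (Fin m) 𝕂) :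
    l0Norm Ψ = ∑ j : Fin n, ({l | Ψ j l ≠ 0}).ncard := by
  classical
  have h1 : {p : Fin n × Fin m | Ψ p.1 p.2 ≠ 0}.ncard
      = (Finset.univ.filter (fun p : Fin n × Fin m => Ψ p.1 p.2 ≠ 0)).card := by
    rw [← Set.ncard_coe_finset]
    congr 1
    ext p
    simp
  have h2 : ∀ j, ({l | Ψ j l ≠ 0}).ncard
      = (Finset.univ.filter (fun l : Fin m => Ψ j l ≠ 0)).card := by
    intro j
    rw [← Set.ncard_coe_finset]
    congr 1
    ext l
    simp
  rw [l0Norm, h1, Finset.card_filter, Fintype.sum_prod_type]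
  apply Finset.sum_congr rfl
  intro j _
  rw [h2 j, Finset.card_filter]

end Aux

/-- The minimum of `‖Ψ‖₀` over all dual frames `Ψ` of a frame `Φ`
for `𝕂^n` equals `∑_{j=1}^n spark_j(Φ)`. -/
theorem isLeast_l0Norm_dual {𝕂 : Type} [RCLike 𝕂] {n m : ℕ}
    (Φ : Matrix (Fin n) (Fin m) 𝕂) (hΦ : Φ.rank = n) :
    IsLeast {c | ∃ Ψ : Matrix (Fin n) (Fin m) 𝕂, Ψ * Φᴴ = 1 ∧ l0Norm Ψ = c}
      (∑ j : Fin n, sparkJ Φ j) := by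
  classical
  constructor
  · -- membership : construct a sparse dual
    choose z hz1 hz2 using fun j => (row_isLeast Φ hΦ j).1
    refine ⟨Matrix.of fun j l => star (z j l), ?_, ?_⟩
    · ext j k
      have hzk := congr_fun (hz1 j) k
      simp only [Matrix.mulVec, dotProduct] at hzk
      have hstar : ∑ l, star (z j l) * star (Φ k l) = star (∑ l, Φ k l * z j l) := by
        rw [star_sum]
        exact Finset.sum_congr rfl (fun l _ => by rw [star_mul', mul_comm])
      simp only [Matrix.mul_apply, Matrix.conjTranspose_apply, Matrix.of_apply]
      rw [hstar, hzk]
      by_cases hk : k = j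
      · subst hk
        simp [Matrix.one_apply]
      · rw [Pi.single_eq_of_ne hk, star_zero, Matrix.one_apply, if_neg (Ne.symm hk)]
    · rw [l0Norm_eq_sum]
      apply Finset.sum_congr rfl
      intro j _
      have hset : {l | (Matrix.of fun j l => star (z j l)) j l ≠ 0} = {l | z j l ≠ 0} := by
        ext l
        simp [star_eq_zero]
      rw [hset, hz2 j]
  · -- lower bound
    rintro c ⟨Ψ, hdual, rfl⟩
    rw [l0Norm_eq_sum]
    apply Finset.sum_le_sum
    intro j _
    have hsol : Φ.mulVec (fun l => star (Ψ j l)) = Pi.single j 1 := by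
      funext k
      have hd := congr_fun (congr_fun hdual j) k
      simp only [Matrix.mul_apply, Matrix.conjTranspose_apply] at hd
      have hstar : Φ.mulVec (fun l => star (Ψ j l)) k
          = star (∑ l, Ψ j l * star (Φ k l)) := by
        rw [star_sum]
        simp only [Matrix.mulVec, dotProduct]
        exact Finset.sum_congr rfl (fun l _ => by rw [star_mul', star_star, mul_comm])
      rw [hstar, hd]
      by_cases hk : k = j
      · subst hk
        simp [Matrix.one_apply]
      · rw [Pi.single_eq_of_ne hk, Matrix.one_apply, if_neg (Ne.symm hk), star_zero]
    have hset : {l | star (Ψ j l) ≠ 0} = {l | Ψ j l ≠ 0} := by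
      ext l
      simp [star_eq_zero]
    have hmemrow : {l | Ψ j l ≠ 0}.ncard ∈ {c | ∃ x : Fin m → 𝕂,
        Φ.mulVec x = Pi.single j 1 ∧ {l | x l ≠ 0}.ncard = c} :=
      ⟨fun l => star (Ψ j l), hsol, by rw [hset]⟩
    exact (row_isLeast Φ hΦ j).2 hmemrow
end

section
/- Let Φ be a frame for 𝕂^n with m vectors such that for every j = 1,…,n the submatrix Φ^(j) is in general position, i.e., every collection of n−1 columns of Φ^(j) is linearly independent. Then every dual frame Ψ of Φ satisfies ‖Ψ‖₀ ≥ n². -/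
open Matrix

/-- A matrix is in general position (relative to the cardinality `k`) if every
collection of `k` of its columns is linearly independent. -/
def InGeneralPosition {𝕂 : Type} [RCLike 𝕂] {l : Type} {m : ℕ}
    (M : Matrix l (Fin m) 𝕂) (k : ℕ) : Prop :=
  ∀ S : Finset (Fin m), S.card = k →
    LinearIndependent 𝕂 (fun i : S => fun r => M r (i : Fin m))

/-- If each submatrix `Φ^(j)` (delete row `j`) of a frame `Φ` for `𝕂^n`
is in general position (every `n-1` of its columns are linearly independent), then
every dual frame `Ψ` of `Φ` satisfies `‖Ψ‖₀ ≥ n²`. -/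
theorem dual_l0Norm_ge_sq_of_general_position {𝕂 : Type} [RCLike 𝕂] {n m : ℕ}
    (Φ : Matrix (Fin n) (Fin m) 𝕂) (hΦ : Φ.rank = n)
    (hGP : ∀ j : Fin n, InGeneralPosition (deleteRow Φ j) (n - 1))
    (Ψ : Matrix (Fin n) (Fin m) 𝕂) (hΨ : Ψ * Φᴴ = 1) :
    n ^ 2 ≤ l0Norm Ψ := by
  classical
  have hnm : n ≤ m := by
    have h1 : Φ.rank ≤ Fintype.card (Fin m) := Matrix.rank_le_card_width Φ
    simpa [hΦ] using h1
  -- each row of Ψ has at least n nonzero entries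
  have hrow : ∀ i : Fin n,
      n ≤ (Finset.univ.filter (fun k : Fin m => Ψ i k ≠ 0)).card := by
    intro i
    by_contra hlt
    push_neg at hlt
    set S := Finset.univ.filter (fun k : Fin m => Ψ i k ≠ 0) with hS
    have hScard : S.card ≤ n - 1 := Nat.le_sub_one_of_lt hlt
    obtain ⟨T, hST, hTcard⟩ :=
      Finset.exists_superset_card_eq hScard
        (by simpa using le_trans (Nat.sub_le n 1) hnm)
    have hLI := hGP i T hTcard
    rw [Fintype.linearIndependent_iff] at hLI
    have hzero : ∀ k : T, (starRingEnd 𝕂) (Ψ i (k : Fin m)) = 0 := by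
      apply hLI
      funext r
      have hsum : ∑ k : T, (starRingEnd 𝕂) (Ψ i (k : Fin m)) * Φ r.1 (k : Fin m)
          = ∑ k : Fin m, (starRingEnd 𝕂) (Ψ i k) * Φ r.1 k := by
        rw [Finset.sum_coe_sort T (fun k => (starRingEnd 𝕂) (Ψ i k) * Φ r.1 k)]
        apply Finset.sum_subset T.subset_univ
        intro k _ hkT
        have hk0 : Ψ i k = 0 := by
          by_contra hk
          exact hkT (hST (by simp [hS, hk]))
        simp [hk0]
      have hmul : ∑ k : Fin m, (starRingEnd 𝕂) (Ψ i k) * Φ r.1 k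
          = (starRingEnd 𝕂) ((Ψ * Φᴴ) i r.1) := by
        rw [Matrix.mul_apply, map_sum]
        congr 1
        funext k
        simp [Matrix.conjTranspose_apply, mul_comm]
      have : ((Ψ * Φᴴ) i r.1) = 0 := by
        rw [hΨ]
        exact Matrix.one_apply_ne (Ne.symm r.2)
      simp only [Finset.sum_apply, Pi.smul_apply, smul_eq_mul, Pi.zero_apply]
      calc ∑ k : T, (starRingEnd 𝕂) (Ψ i (k : Fin m)) * deleteRow Φ i r (k : Fin m)
          = ∑ k : T, (starRingEnd 𝕂) (Ψ i (k : Fin m)) * Φ r.1 (k : Fin m) := rfl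
        _ = (starRingEnd 𝕂) ((Ψ * Φᴴ) i r.1) := by rw [hsum, hmul]
        _ = 0 := by rw [this]; simp
    have hrow0 : ∀ k : Fin m, Ψ i k = 0 := by
      intro k
      by_contra hk
      have hkS : k ∈ S := by simp [hS, hk]
      have := hzero ⟨k, hST hkS⟩
      exact hk (by simpa using this)
    have h1 : (Ψ * Φᴴ) i i = 1 := by rw [hΨ]; simp
    rw [Matrix.mul_apply] at h1
    simp only [hrow0, zero_mul, Finset.sum_const_zero] at h1
    exact zero_ne_one h1
  -- sum over rows
  have hl0 : l0Norm Ψ =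
      (Finset.univ.filter (fun p : Fin n × Fin m => Ψ p.1 p.2 ≠ 0)).card := by
    rw [l0Norm, Set.ncard_eq_toFinset_card']
    congr 1
    ext p
    simp
  rw [hl0, Finset.card_eq_sum_card_fiberwise
    (f := Prod.fst) (t := Finset.univ) (fun x _ => Finset.mem_univ _)]
  calc n ^ 2 = ∑ _i : Fin n, n := by simp [sq, mul_comm]
    _ ≤ _ := by
      apply Finset.sum_le_sum
      intro i _
      refine le_trans (hrow i) (Finset.card_le_card_of_injOn (fun k => (i, k)) ?_ ?_)
      · intro k hk
        simp only [Finset.mem_filter, Finset.mem_univ, true_and] at hk ⊢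
        exact Finset.mem_filter.mpr ⟨by simpa using hk, rfl⟩
      · intro a _ b _ hab
        simpa using congrArg Prod.snd hab
end

section
/- Let n, m ∈ ℕ with m ≥ n ≥ 1, let a_1,…,a_m > 0 be pairwise distinct positive reals and b_1,…,b_n > 0 be pairwise distinct positive reals, and let Φ ∈ ℝ^{n×m} be the generalized Vandermonde matrix with entries Φ_{j,i} = a_i^{b_j}. Then for every j = 1,…,n the submatrix Φ^(j) is in general position, and consequently every dual frame Ψ of Φ satisfies ‖Ψ‖₀ ≥ n². -/
open Matrix

open Finset
lemma cheb : ∀ (k : ℕ) (b : Fin k → ℝ), Function.Injective b →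
    ∀ (x : Fin k → ℝ), StrictMono x → (∀ i, 0 < x i) →
    ∀ (c : Fin k → ℝ), (∀ i, ∑ j, c j * x i ^ b j = 0) → ∀ j, c j = 0 := by
  intro k
  induction k with
  | zero => exact fun _ _ _ _ _ _ _ j => j.elim0
  | succ k ih =>
    intro b hb x hx hxpos c hzero
    set g : ℝ → ℝ := fun t => ∑ j, c j * t ^ (b j - b 0) with hg
    set g' : ℝ → ℝ := fun t => ∑ j, c j * ((b j - b 0) * t ^ (b j - b 0 - 1)) with hg'
    have hderiv : ∀ t : ℝ, 0 < t → HasDerivAt g (g' t) t := by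
      intro t ht
      exact HasDerivAt.fun_sum fun j _ =>
        (Real.hasDerivAt_rpow_const (Or.inl ht.ne')).const_mul (c j)
    have hgz : ∀ i, g (x i) = 0 := by
      intro i
      have h0 : (x i : ℝ) ^ (b 0) ≠ 0 := (Real.rpow_pos_of_pos (hxpos i) _).ne'
      have : g (x i) = (∑ j, c j * x i ^ b j) / x i ^ b 0 := by
        rw [Finset.sum_div]
        refine Finset.sum_congr rfl fun j _ => ?_
        rw [Real.rpow_sub (hxpos i), mul_div_assoc]
      rw [this, hzero i, zero_div]
    -- Rolle points
    have hroll : ∀ i : Fin k, ∃ y ∈ Set.Ioo (x i.castSucc) (x i.succ), g' y = 0 := by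
      intro i
      have hlt : x i.castSucc < x i.succ := hx (Fin.castSucc_lt_succ (i := i))
      refine exists_hasDerivAt_eq_zero hlt ?_ ((hgz _).trans (hgz _).symm) ?_
      · refine ContinuousOn.mono ?_ (Set.Icc_subset_Icc le_rfl le_rfl)
        intro t htmem
        have ht : 0 < t := lt_of_lt_of_le (hxpos _) htmem.1
        exact ((hderiv t ht).continuousAt).continuousWithinAt
      · intro t htmem
        exact hderiv t (lt_trans (hxpos _) htmem.1)
    choose y hy1 hy2 using hroll
    have hypos : ∀ i, 0 < y i := fun i => lt_trans (hxpos _) (hy1 i).1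
    have hymono : StrictMono y := by
      intro i i' hii'
      calc y i < x i.succ := (hy1 i).2
        _ ≤ x i'.castSucc := hx.monotone (by
            have h2 : (i : ℕ) < i' := hii'
            rw [Fin.le_def, Fin.val_succ, Fin.coe_castSucc]; omega)
        _ < y i' := (hy1 i').1
    set b' : Fin k → ℝ := fun j => b j.succ - b 0 - 1 with hb'
    set c' : Fin k → ℝ := fun j => c j.succ * (b j.succ - b 0) with hc'
    have hb'inj : Function.Injective b' := by
      intro u v huv
      have : b u.succ = b v.succ := by simpa [hb'] using huv
      exact Fin.succ_injective _ (hb this)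
    have hzero' : ∀ i, ∑ j, c' j * y i ^ b' j = 0 := by
      intro i
      have := hy2 i
      simp only [hg', Fin.sum_univ_succ] at this
      simp only [sub_self, zero_mul, mul_zero, zero_add] at this
      rw [← this]
      refine Finset.sum_congr rfl fun j _ => ?_
      simp [hc', hb']; ring
    have hcsucc : ∀ j : Fin k, c j.succ = 0 := by
      intro j
      have h := ih b' hb'inj y hymono hypos c' hzero' j
      have hne : b j.succ - b 0 ≠ 0 := by
        intro h0
        exact (Fin.succ_ne_zero j) (hb (by linarith))
      simpa [hc', hne] using (mul_eq_zero.1 h).resolve_right hne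
    have hc0 : c 0 = 0 := by
      have h := hzero 0
      rw [Fin.sum_univ_succ] at h
      simp only [hcsucc, zero_mul, Finset.sum_const_zero, add_zero] at h
      have : (x 0 : ℝ) ^ (b 0) ≠ 0 := (Real.rpow_pos_of_pos (hxpos 0) _).ne'
      exact (mul_eq_zero.1 h).resolve_right this
    intro j
    rcases Fin.eq_zero_or_eq_succ j with rfl | ⟨j', rfl⟩
    · exact hc0
    · exact hcsucc j'

private lemma cheb' (k : ℕ) (b : Fin k → ℝ) (hb : Function.Injective b)
    (x : Fin k → ℝ) (hxinj : Function.Injective x) (hxpos : ∀ i, 0 < x i)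
    (c : Fin k → ℝ) (hzero : ∀ i, ∑ j, c j * x i ^ b j = 0) : ∀ j, c j = 0 := by
  set σ := Tuple.sort x with hσ
  have hmono : StrictMono (x ∘ σ) :=
    (Tuple.monotone_sort x).strictMono_of_injective (hxinj.comp σ.injective)
  exact cheb k b hb (x ∘ σ) hmono (fun i => hxpos _) c (fun i => hzero (σ i))

private lemma vand_indep {n m : ℕ} (a : Fin m → ℝ) (ha : ∀ i, 0 < a i)
    (ha' : Function.Injective a) (b : Fin n → ℝ) (hb' : Function.Injective b)
    (j : Fin n) (S : Finset (Fin m)) (hS : S.card = n - 1) (g : S → ℝ)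
    (hzero : ∀ r : {r : Fin n // r ≠ j}, ∑ i : S, g i * a i.1 ^ b r.1 = 0) :
    ∀ i, g i = 0 := by
  have hcard1 : Fintype.card {r : Fin n // r ≠ j} = n - 1 := by
    simp [Fintype.card_subtype_compl]
  have hcard2 : Fintype.card S = n - 1 := by
    rw [Fintype.card_coe, hS]
  let e1 : Fin (n-1) ≃ {r : Fin n // r ≠ j} := (Fintype.equivFinOfCardEq hcard1).symm
  let e2 : Fin (n-1) ≃ S := (Fintype.equivFinOfCardEq hcard2).symm
  have key := cheb' (n-1) (fun j' => Real.log (a (e2 j').1))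
    (by
      intro u v huv
      have : a (e2 u).1 = a (e2 v).1 := by
        have := congrArg Real.exp huv
        rwa [Real.exp_log (ha _), Real.exp_log (ha _)] at this
      exact e2.injective (Subtype.ext (ha' this)))
    (fun i => Real.exp (b (e1 i).1))
    (by
      intro u v huv
      exact e1.injective (Subtype.ext (hb' (Real.exp_injective huv))))
    (fun i => Real.exp_pos _)
    (fun j' => g (e2 j'))
    (by
      intro i
      have hrw : ∀ s : S, g s * Real.exp (b (e1 i).1) ^ Real.log (a s.1)
          = g s * a s.1 ^ b (e1 i).1 := by
        intro s
        congr 1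
        rw [Real.rpow_def_of_pos (Real.exp_pos _), Real.log_exp,
          Real.rpow_def_of_pos (ha _), mul_comm]
      calc ∑ j', g (e2 j') * Real.exp (b (e1 i).1) ^ Real.log (a (e2 j').1)
          = ∑ s : S, g s * Real.exp (b (e1 i).1) ^ Real.log (a s.1) :=
            Equiv.sum_comp e2 (fun s => g s * Real.exp (b (e1 i).1) ^ Real.log (a s.1))
        _ = ∑ s : S, g s * a s.1 ^ b (e1 i).1 := by
            exact Finset.sum_congr rfl fun s _ => hrw s
        _ = 0 := hzero (e1 i))
  intro i
  have := key (e2.symm i)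
  simpa using this

/-- For pairwise distinct positive reals `a_1,…,a_m` and pairwise
distinct positive reals `b_1,…,b_n` (with `m ≥ n ≥ 1`), the generalized Vandermonde
matrix `Φ_{j,i} = a_i ^ b_j` has every row-deleted submatrix `Φ^(j)` in general
position; consequently every dual frame `Ψ` of `Φ` satisfies `‖Ψ‖₀ ≥ n²`. -/
theorem generalized_vandermonde_general_position {n m : ℕ}
    (hn : 1 ≤ n) (hnm : n ≤ m)
    (a : Fin m → ℝ) (ha : ∀ i, 0 < a i) (ha' : Function.Injective a)
    (b : Fin n → ℝ) (hb : ∀ j, 0 < b j) (hb' : Function.Injective b)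
    (Φ : Matrix (Fin n) (Fin m) ℝ) (hΦ : ∀ j i, Φ j i = a i ^ b j) :
    (∀ j : Fin n, InGeneralPosition (deleteRow Φ j) (n - 1)) ∧
    ∀ Ψ : Matrix (Fin n) (Fin m) ℝ, Ψ * Φᴴ = 1 → n ^ 2 ≤ l0Norm Ψ := by
  have hgp : ∀ j : Fin n, InGeneralPosition (deleteRow Φ j) (n - 1) := by
    intro j S hS
    rw [Fintype.linearIndependent_iff]
    intro g hg
    refine vand_indep a ha ha' b hb' j S hS g ?_
    intro r
    have := congrFun hg r
    simp only [Finset.sum_apply, Pi.smul_apply, smul_eq_mul, Pi.zero_apply] at this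
    rw [← this]
    refine Finset.sum_congr rfl fun i _ => ?_
    rw [deleteRow, hΦ]
  refine ⟨hgp, ?_⟩
  intro Ψ hΨ
  -- entries of the product
  have hprod : ∀ j r : Fin n, ∑ i, Ψ j i * Φ r i = if j = r then 1 else 0 := by
    intro j r
    have := congrFun (congrFun hΨ j) r
    rw [Matrix.mul_apply] at this
    simp only [Matrix.conjTranspose_apply, RCLike.star_def, starRingEnd_apply, star_trivial] at this
    rw [this, Matrix.one_apply]
  -- each row has at least n nonzero entries
  set T : Fin n → Finset (Fin m) := fun j => univ.filter (fun i => Ψ j i ≠ 0) with hT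
  have hrow : ∀ j, n ≤ (T j).card := by
    intro j
    by_contra hcon
    push_neg at hcon
    have hle : (T j).card ≤ n - 1 := by omega
    obtain ⟨S, hTS, -, hScard⟩ := Finset.exists_subsuperset_card_eq
      (Finset.subset_univ (T j)) (by simpa using hle)
      (by simp; omega)
    have hzero : ∀ r : {r : Fin n // r ≠ j}, ∑ i : S, Ψ j i.1 * a i.1 ^ b r.1 = 0 := by
      intro r
      have h1 : ∑ i : S, Ψ j i.1 * a i.1 ^ b r.1 = ∑ i ∈ S, Ψ j i * a i ^ b r.1 :=
        Finset.sum_attach S (fun i => Ψ j i * a i ^ b r.1)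
      have h2 : ∑ i ∈ S, Ψ j i * a i ^ b r.1 = ∑ i, Ψ j i * a i ^ b r.1 := by
        refine Finset.sum_subset (Finset.subset_univ S) ?_
        intro i _ hiS
        have : Ψ j i = 0 := by
          by_contra hne
          exact hiS (hTS (by simp [hT, hne]))
        simp [this]
      have h3 : ∑ i, Ψ j i * a i ^ b r.1 = 0 := by
        have := hprod j r.1
        rw [if_neg (Ne.symm r.2)] at this
        rw [← this]
        exact Finset.sum_congr rfl fun i _ => by rw [hΦ]
      rw [h1, h2, h3]
    have hzS := vand_indep a ha ha' b hb' j S hScard (fun i => Ψ j i.1) hzero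
    have hallzero : ∀ i, Ψ j i = 0 := by
      intro i
      by_cases hiS : i ∈ S
      · exact hzS ⟨i, hiS⟩
      · by_contra hne
        exact hiS (hTS (by simp [hT, hne]))
    have := hprod j j
    rw [if_pos rfl] at this
    simp [hallzero] at this
  -- counting
  have hl0 : l0Norm Ψ = (univ.filter (fun p : Fin n × Fin m => Ψ p.1 p.2 ≠ 0)).card := by
    rw [l0Norm, Set.ncard_eq_toFinset_card']
    congr 1
    ext p
    simp
  rw [hl0]
  set B := univ.filter (fun p : Fin n × Fin m => Ψ p.1 p.2 ≠ 0) with hB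
  have hfib : B.card = ∑ j : Fin n, (B.filter (fun p => p.1 = j)).card :=
    Finset.card_eq_sum_card_fiberwise (fun p _ => Finset.mem_univ p.1)
  have hfibge : ∀ j, n ≤ (B.filter (fun p => p.1 = j)).card := by
    intro j
    refine le_trans (hrow j) ?_
    refine Finset.card_le_card_of_injOn (fun i => (j, i)) ?_ ?_
    · intro i hi
      simp only [hT, Finset.mem_coe, Finset.mem_filter, Finset.mem_univ, true_and] at hi
      simp [hB, hi]
    · intro u _ v _ huv
      simpa using congrArg Prod.snd huv
  calc n ^ 2 = ∑ _j : Fin n, n := by simp [sq]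
    _ ≤ ∑ j : Fin n, (B.filter (fun p => p.1 = j)).card :=
        Finset.sum_le_sum fun j _ => hfibge j
    _ = B.card := hfib.symm
end

section
/- Let m ≥ n ≥ 1 and let P(n,m) ⊂ 𝕂^{n×m} be the set of all matrices Φ such that spark(Φ^(j)) = n for every j = 1,…,n (equivalently, each Φ^(j) is in general position). Then P(n,m) is open and dense in 𝕂^{n×m}; in particular, its complement is closed and nowhere dense. -/
open Matrix

section Aux

/-- A finite intersection of dense open sets is dense. -/
lemma dense_iInter_of_isOpen_finite {X ι : Type*} [TopologicalSpace X] [Fintype ι]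
    {f : ι → Set X} (ho : ∀ i, IsOpen (f i)) (hd : ∀ i, Dense (f i)) :
    Dense (⋂ i, f i) := by
  classical
  have key : ∀ s : Finset ι, Dense (⋂ i ∈ s, f i) := by
    intro s
    induction s using Finset.induction_on with
    | empty => simp only [Finset.notMem_empty, Set.iInter_of_empty, Set.iInter_univ]; exact dense_univ
    | insert _ _ hna ih =>
      rename_i a s'
      rw [Finset.set_biInter_insert]
      exact (hd a).inter_of_isOpen_left ih (ho a)
  have := key Finset.univ
  simpa using this

variable {𝕂 : Type} [RCLike 𝕂] {n m : ℕ}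

lemma card_rowType (j : Fin n) : Fintype.card {i : Fin n // i ≠ j} = n - 1 := by
  simp [Fintype.card_subtype_compl]

/-- Linear independence of a full-size column set is equivalent to nonvanishing of a
determinant. -/
lemma li_iff_det (Φ : Matrix (Fin n) (Fin m) 𝕂) (j : Fin n) (S : Finset (Fin m))
    (e : {i : Fin n // i ≠ j} ≃ S) :
    LinearIndependent 𝕂 (fun i : S => fun r : {i : Fin n // i ≠ j} => Φ r.1 (i : Fin m)) ↔
      Matrix.det (Matrix.of fun r r' : {i : Fin n // i ≠ j} => Φ r.1 ((e r' : S) : Fin m)) ≠ 0 := by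
  classical
  rw [← linearIndependent_equiv e]
  have : (fun i : S => fun r : {i : Fin n // i ≠ j} => Φ r.1 (i : Fin m)) ∘ e
      = fun r' => (Matrix.of fun r r' : {i : Fin n // i ≠ j} => Φ r.1 ((e r' : S) : Fin m)).col r' := by
    funext r'
    rfl
  rw [this, Matrix.linearIndependent_cols_iff_isUnit, Matrix.isUnit_iff_isUnit_det,
    isUnit_iff_ne_zero]

/-- Characterization of the spark condition. -/
lemma spark_deleteRow_eq_iff (hn : 1 ≤ n) (hnm : n ≤ m)
    (Φ : Matrix (Fin n) (Fin m) 𝕂) (j : Fin n) :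
    spark (deleteRow Φ j) = n ↔
      ∀ S : Finset (Fin m), S.card = n - 1 →
        LinearIndependent 𝕂 (fun i : S => fun r => deleteRow Φ j r (i : Fin m)) := by
  classical
  set T : Set ℕ := insert (m + 1)
    {c | ∃ S : Finset (Fin m), S.card = c ∧
      ¬ LinearIndependent 𝕂 (fun i : S => fun r => deleteRow Φ j r (i : Fin m))} with hT
  have hnT : n ∈ T := by
    obtain ⟨S, _, hScard⟩ := Finset.exists_subset_card_eq
      (show n ≤ (Finset.univ : Finset (Fin m)).card by simpa using hnm)
    refine Set.mem_insert_iff.2 (Or.inr ⟨S, hScard, fun h => ?_⟩)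
    have hle := h.fintype_card_le_finrank
    rw [Module.finrank_fintype_fun_eq_card, card_rowType, Fintype.card_coe, hScard] at hle
    omega
  constructor
  · intro hs S hScard
    by_contra hLI
    have hmem : n - 1 ∈ T := Set.mem_insert_iff.2 (Or.inr ⟨S, hScard, hLI⟩)
    have h1 := Nat.sInf_le hmem
    have hs' : sInf T = n := hs
    omega
  · intro h
    refine le_antisymm (Nat.sInf_le hnT) (le_csInf ⟨n, hnT⟩ ?_)
    rintro c (rfl | ⟨S, hScard, hdep⟩)
    · omega
    by_contra hc
    push_neg at hc
    obtain ⟨S', hSS', hS'card⟩ := Finset.exists_superset_card_eq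
      (show S.card ≤ n - 1 by omega) (by simp; omega)
    have hLI := h S' hS'card
    refine hdep ?_
    have hinj : Function.Injective (fun x : S => (⟨x.1, hSS' x.2⟩ : S')) := by
      intro a b hab
      have h2 := congrArg Subtype.val hab
      exact Subtype.ext h2
    exact hLI.comp _ hinj

end Aux

/-- For `m ≥ n ≥ 1`, the set `P(n,m)` of matrices `Φ ∈ 𝕂^{n×m}` with
`spark(Φ^(j)) = n` for all `j` is open and dense in `𝕂^{n×m}`; in particular its
complement is closed and nowhere dense. -/
theorem generic_spark_open_dense {𝕂 : Type} [RCLike 𝕂] {n m : ℕ}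
    (hn : 1 ≤ n) (hnm : n ≤ m) :
    IsOpen {Φ : Matrix (Fin n) (Fin m) 𝕂 | ∀ j : Fin n, spark (deleteRow Φ j) = n} ∧
    Dense {Φ : Matrix (Fin n) (Fin m) 𝕂 | ∀ j : Fin n, spark (deleteRow Φ j) = n} ∧
    IsClosed {Φ : Matrix (Fin n) (Fin m) 𝕂 | ∀ j : Fin n, spark (deleteRow Φ j) = n}ᶜ ∧
    IsNowhereDense {Φ : Matrix (Fin n) (Fin m) 𝕂 | ∀ j : Fin n, spark (deleteRow Φ j) = n}ᶜ := by
  classical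
  -- reformulate the set
  have hset : {Φ : Matrix (Fin n) (Fin m) 𝕂 | ∀ j : Fin n, spark (deleteRow Φ j) = n}
      = ⋂ p : Fin n × Finset (Fin m),
        {Φ : Matrix (Fin n) (Fin m) 𝕂 | p.2.card = n - 1 →
          LinearIndependent 𝕂 (fun i : p.2 => fun r => deleteRow Φ p.1 r (i : Fin m))} := by
    ext Φ
    simp only [Set.mem_setOf_eq, Set.mem_iInter, Prod.forall]
    constructor
    · intro h j S hS
      exact (spark_deleteRow_eq_iff hn hnm Φ j).1 (h j) S hS
    · intro h j
      exact (spark_deleteRow_eq_iff hn hnm Φ j).2 (fun S hS => h j S hS)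
  -- openness of each piece
  have hopen : ∀ p : Fin n × Finset (Fin m),
      IsOpen {Φ : Matrix (Fin n) (Fin m) 𝕂 | p.2.card = n - 1 →
        LinearIndependent 𝕂 (fun i : p.2 => fun r => deleteRow Φ p.1 r (i : Fin m))} := by
    rintro ⟨j, S⟩
    by_cases hS : S.card = n - 1
    · have : {Φ : Matrix (Fin n) (Fin m) 𝕂 | S.card = n - 1 →
          LinearIndependent 𝕂 (fun i : S => fun r => deleteRow Φ j r (i : Fin m))}
          = (fun Φ : Matrix (Fin n) (Fin m) 𝕂 =>
              (fun i : S => fun r : {i : Fin n // i ≠ j} => Φ r.1 (i : Fin m))) ⁻¹'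
            {f : S → ({i : Fin n // i ≠ j} → 𝕂) | LinearIndependent 𝕂 f} := by
        ext Φ
        simp [hS, deleteRow]
      rw [this]
      have hcont : Continuous (fun Φ : Matrix (Fin n) (Fin m) 𝕂 =>
          (fun i : S => fun r : {i : Fin n // i ≠ j} => Φ r.1 (i : Fin m))) := by
        apply continuous_pi
        intro s
        apply continuous_pi
        intro r
        exact (continuous_apply (s : Fin m)).comp (continuous_apply r.1)
      exact isOpen_setOf_linearIndependent.preimage hcont
    · have : {Φ : Matrix (Fin n) (Fin m) 𝕂 | S.card = n - 1 →
          LinearIndependent 𝕂 (fun i : S => fun r => deleteRow Φ j r (i : Fin m))}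
          = Set.univ := by
        ext Φ; simp [hS]
      rw [this]; exact isOpen_univ
  -- density of each piece
  have hdense : ∀ p : Fin n × Finset (Fin m),
      Dense {Φ : Matrix (Fin n) (Fin m) 𝕂 | p.2.card = n - 1 →
        LinearIndependent 𝕂 (fun i : p.2 => fun r => deleteRow Φ p.1 r (i : Fin m))} := by
    rintro ⟨j, S⟩
    by_cases hS : S.card = n - 1
    swap
    · have : {Φ : Matrix (Fin n) (Fin m) 𝕂 | S.card = n - 1 →
          LinearIndependent 𝕂 (fun i : S => fun r => deleteRow Φ j r (i : Fin m))}
          = Set.univ := by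
        ext Φ; simp [hS]
      rw [this]; exact dense_univ
    -- the interesting case
    have ecard : Fintype.card {i : Fin n // i ≠ j} = Fintype.card S := by
      rw [card_rowType, Fintype.card_coe, hS]
    let e : {i : Fin n // i ≠ j} ≃ S := Fintype.equivOfCardEq ecard
    -- a good matrix
    let B0 : Matrix (Fin n) (Fin m) 𝕂 := fun i k =>
      if h : i = j then 0 else if ((e ⟨i, h⟩ : S) : Fin m) = k then 1 else 0
    have hB0 : (Matrix.of fun r r' : {i : Fin n // i ≠ j} => B0 r.1 ((e r' : S) : Fin m))
        = (1 : Matrix {i : Fin n // i ≠ j} {i : Fin n // i ≠ j} 𝕂) := by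
      ext r r'
      simp only [Matrix.of_apply, B0, dif_neg r.2, Matrix.one_apply]
      by_cases h : r = r'
      · subst h; simp
      · rw [if_neg, if_neg h]
        intro hc
        exact h (e.injective (Subtype.val_injective hc))
    intro Φ
    rw [mem_closure_iff_nhds]
    intro t ht
    -- the line from Φ to B0, and the determinant polynomial along it
    set q : Polynomial 𝕂 := Matrix.det (Matrix.of fun r r' : {i : Fin n // i ≠ j} =>
      Polynomial.C (Φ r.1 ((e r' : S) : Fin m)) +
        Polynomial.X * Polynomial.C (B0 r.1 ((e r' : S) : Fin m) - Φ r.1 ((e r' : S) : Fin m)))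
      with hq
    set ℓ : 𝕂 → Matrix (Fin n) (Fin m) 𝕂 :=
      fun s => fun i k => Φ i k + s * (B0 i k - Φ i k) with hℓ
    have heval : ∀ s : 𝕂, q.eval s = Matrix.det
        (Matrix.of fun r r' : {i : Fin n // i ≠ j} => (ℓ s) r.1 ((e r' : S) : Fin m)) := by
      intro s
      rw [hq, ← Polynomial.coe_evalRingHom, RingHom.map_det]
      congr 1
      ext r r'
      simp [ℓ, Matrix.map_apply]
    have hq1 : q.eval 1 = 1 := by
      rw [heval 1]
      have : (Matrix.of fun r r' : {i : Fin n // i ≠ j} => (ℓ 1) r.1 ((e r' : S) : Fin m))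
          = (Matrix.of fun r r' : {i : Fin n // i ≠ j} => B0 r.1 ((e r' : S) : Fin m)) := by
        ext r r'; simp [ℓ]
      rw [this, hB0, Matrix.det_one]
    have hqne : q ≠ 0 := by
      intro h
      rw [h] at hq1
      simp at hq1
    -- the line is continuous
    have hℓcont : Continuous ℓ := by
      refine continuous_pi fun i => continuous_pi fun k => ?_
      exact continuous_const.add ((continuous_id.mul continuous_const))
    have hℓ0 : ℓ 0 = Φ := by
      funext i k; simp [ℓ]
    have hpre : ℓ ⁻¹' t ∈ nhds (0 : 𝕂) := by
      apply hℓcont.continuousAt.preimage_mem_nhds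
      rwa [hℓ0]
    have hroots : {x : 𝕂 | q.IsRoot x}.Finite := Polynomial.finite_setOf_isRoot hqne
    have hdc : Dense {x : 𝕂 | q.IsRoot x}ᶜ := hroots.countable.dense_compl 𝕂
    obtain ⟨s₀, hs₀t, hs₀⟩ := mem_closure_iff_nhds.1 (hdc 0) _ hpre
    refine ⟨ℓ s₀, hs₀t, ?_⟩
    simp only [Set.mem_setOf_eq]
    intro _
    rw [show (fun i : S => fun r => deleteRow (ℓ s₀) j r (i : Fin m))
        = (fun i : S => fun r : {i : Fin n // i ≠ j} => (ℓ s₀) r.1 (i : Fin m)) from rfl]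
    rw [li_iff_det (ℓ s₀) j S e]
    rw [← heval s₀]
    exact hs₀
  -- assemble
  rw [hset]
  have hO : IsOpen (⋂ p : Fin n × Finset (Fin m),
      {Φ : Matrix (Fin n) (Fin m) 𝕂 | p.2.card = n - 1 →
        LinearIndependent 𝕂 (fun i : p.2 => fun r => deleteRow Φ p.1 r (i : Fin m))}) :=
    isOpen_iInter_of_finite hopen
  have hD : Dense (⋂ p : Fin n × Finset (Fin m),
      {Φ : Matrix (Fin n) (Fin m) 𝕂 | p.2.card = n - 1 →
        LinearIndependent 𝕂 (fun i : p.2 => fun r => deleteRow Φ p.1 r (i : Fin m))}) :=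
    dense_iInter_of_isOpen_finite hopen hdense
  refine ⟨hO, hD, hO.isClosed_compl, ?_⟩
  rw [IsNowhereDense, (hO.isClosed_compl).closure_eq, interior_eq_empty_iff_dense_compl,
    compl_compl]
  exact hD
end

section
/- Let m ≥ n ≥ 1 and let P(n,m) ⊂ 𝕂^{n×m} be the set of all matrices Φ such that spark(Φ^(j)) = n for every j = 1,…,n. Then the complement of P(n,m) in 𝕂^{n×m} has (induced Euclidean) Lebesgue measure zero. -/
open Matrix MeasureTheory

/-- Lebesgue measure on the space of `n × m` matrices over `𝕂`, obtained as the product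
(Euclidean) measure from the measure on `𝕂`. -/
noncomputable instance matrixMeasureSpace {𝕂 : Type} [RCLike 𝕂] [MeasureSpace 𝕂]
    [SigmaFinite (volume : Measure 𝕂)] {n m : ℕ} :
    MeasureSpace (Matrix (Fin n) (Fin m) 𝕂) :=
  inferInstanceAs (MeasureSpace (Fin n → Fin m → 𝕂))

set_option linter.unusedSectionVars false
set_option linter.unnecessarySimpa false
set_option maxHeartbeats 1000000

section Aux

variable {𝕂 : Type} [RCLike 𝕂] [MeasureSpace 𝕂] [BorelSpace 𝕂]
  [SigmaFinite (volume : Measure 𝕂)] [(volume : Measure 𝕂).IsAddHaarMeasure]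

lemma measurable_mv_eval {ι : Type*} (p : MvPolynomial ι 𝕂) :
    Measurable (fun x : ι → 𝕂 => MvPolynomial.eval x p) := by
  induction p using MvPolynomial.induction_on with
  | C a => simpa using measurable_const
  | add p q hp hq => simp only [map_add]; exact hp.add hq
  | mul_X p i hp => simp only [map_mul, MvPolynomial.eval_X]; exact hp.mul (measurable_pi_apply i)

lemma mv_zero_set_null : ∀ (k : ℕ) (p : MvPolynomial (Fin k) 𝕂), p ≠ 0 →
    volume {x : Fin k → 𝕂 | MvPolynomial.eval x p = 0} = 0 := by
  intro k
  induction k with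
  | zero =>
    intro p hp
    obtain ⟨c, rfl⟩ := MvPolynomial.C_surjective (Fin 0) p
    have hc : c ≠ 0 := fun h => hp (by simp [h])
    have h0 : {x : Fin 0 → 𝕂 | MvPolynomial.eval x (MvPolynomial.C c) = 0} = (∅ : Set _) := by
      ext x; simpa using hc
    rw [h0, measure_empty]
  | succ k ih =>
    intro p hp
    set q := MvPolynomial.finSuccEquiv 𝕂 k p with hqdef
    have hq0 : q ≠ 0 := by
      intro h
      exact hp ((map_eq_zero_iff _ (AlgEquiv.injective _)).1 h)
    have hlead : q.leadingCoeff ≠ 0 := Polynomial.leadingCoeff_ne_zero.2 hq0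
    set s : Set ((Fin k → 𝕂) × 𝕂) :=
      {z | MvPolynomial.eval (Fin.cons z.2 z.1) p = 0} with hsdef
    have mcons : Measurable (fun z : (Fin k → 𝕂) × 𝕂 => (Fin.cons z.2 z.1 : Fin (k+1) → 𝕂)) := by
      refine measurable_pi_iff.2 fun i => ?_
      refine Fin.cases ?_ (fun j => ?_) i
      · simpa using measurable_snd
      · simp only [Fin.cons_succ]; exact (measurable_pi_apply j).comp measurable_fst
    have hs : MeasurableSet s :=
      ((measurable_mv_eval p).comp mcons) (MeasurableSet.singleton 0)
    have h2 : (MeasurableEquiv.piFinSuccAbove (fun _ : Fin (k+1) => 𝕂) 0) ⁻¹'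
        (Prod.swap ⁻¹' s) = {x : Fin (k+1) → 𝕂 | MvPolynomial.eval x p = 0} := by
      ext x
      have hx : (Fin.cons (x 0) (fun j => x ((0 : Fin (k+1)).succAbove j)) : Fin (k+1) → 𝕂) = x := by
        simp only [Fin.succAbove_zero]
        exact Fin.cons_self_tail x
      simp only [Set.mem_preimage, MeasurableEquiv.piFinSuccAbove_apply, Fin.insertNthEquiv,
        Equiv.coe_fn_symm_mk, Prod.swap, hsdef, Set.mem_setOf_eq, Fin.removeNth_zero,
        Fin.cons_self_tail]
    have key : volume {x : Fin (k+1) → 𝕂 | MvPolynomial.eval x p = 0}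
        = ((volume : Measure (Fin k → 𝕂)).prod (volume : Measure 𝕂)) s := by
      have h1 := measurePreserving_piFinSuccAbove (fun _ : Fin (k+1) => (volume : Measure 𝕂)) 0
      have e0 : (volume : Measure (Fin (k+1) → 𝕂)) = Measure.pi (fun _ => volume) := volume_pi
      have e1 : (volume : Measure (Fin k → 𝕂)) = Measure.pi (fun _ => volume) := volume_pi
      calc volume {x : Fin (k+1) → 𝕂 | MvPolynomial.eval x p = 0}
          = Measure.pi (fun _ : Fin (k+1) => (volume : Measure 𝕂))
            ((MeasurableEquiv.piFinSuccAbove (fun _ : Fin (k+1) => 𝕂) 0) ⁻¹'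
              (Prod.swap ⁻¹' s)) := by rw [← e0, h2]
        _ = ((volume : Measure 𝕂).prod (Measure.pi fun _ : Fin k => (volume : Measure 𝕂)))
              (Prod.swap ⁻¹' s) :=
            h1.measure_preimage ((measurable_swap hs).nullMeasurableSet)
        _ = ((Measure.pi fun _ : Fin k => (volume : Measure 𝕂)).prod (volume : Measure 𝕂)) s := by
            rw [← Measure.prod_swap, Measure.map_apply measurable_swap (measurable_swap hs),
              Set.preimage_preimage]
            simp
        _ = ((volume : Measure (Fin k → 𝕂)).prod (volume : Measure 𝕂)) s := by rw [← e1]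
    rw [key, Measure.measure_prod_null hs]
    have hnull := ih q.leadingCoeff hlead
    have hae : ∀ᵐ (y : Fin k → 𝕂) ∂(volume : Measure (Fin k → 𝕂)),
        MvPolynomial.eval y q.leadingCoeff ≠ 0 := by
      rw [ae_iff]
      simpa using hnull
    filter_upwards [hae] with y hy
    have hmap : q.map (MvPolynomial.eval y) ≠ 0 := by
      intro h
      apply hy
      have h2' : (q.map (MvPolynomial.eval y)).coeff q.natDegree = 0 := by rw [h]; simp
      rw [Polynomial.coeff_map, Polynomial.coeff_natDegree] at h2'
      exact h2'
    have hfin : Set.Finite {a : 𝕂 | Polynomial.eval a (q.map (MvPolynomial.eval y)) = 0} :=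
      Polynomial.finite_setOf_isRoot hmap
    have hsl : (Prod.mk y ⁻¹' s) = {a : 𝕂 | Polynomial.eval a (q.map (MvPolynomial.eval y)) = 0} := by
      ext a
      simp only [Set.mem_preimage, hsdef, Set.mem_setOf_eq]
      rw [MvPolynomial.eval_eq_eval_mv_eval']
    simp only [Pi.zero_apply]
    rw [hsl]
    exact hfin.measure_zero _

/-- splitting off the first row -/

def rowSplit (n m : ℕ) : (Fin (n+1) × Fin m) ≃ (Fin m ⊕ (Fin n × Fin m)) where
  toFun p := Fin.cases (Sum.inl p.2) (fun i => Sum.inr (i, p.2)) p.1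
  invFun := Sum.elim (fun k => (0, k)) (fun q => (q.1.succ, q.2))
  left_inv := by
    rintro ⟨i, k⟩
    induction i using Fin.cases <;> simp
  right_inv := by rintro (k | ⟨i, k⟩) <;> simp

lemma eval_sumToIter {ι ι' : Type*} (r : MvPolynomial (ι ⊕ ι') 𝕂) (a : ι → 𝕂) (Y : ι' → 𝕂) :
    MvPolynomial.eval (Sum.elim a Y) r
      = MvPolynomial.eval a (MvPolynomial.map (MvPolynomial.eval Y)
          (MvPolynomial.sumToIter 𝕂 ι ι' r)) := by
  induction r using MvPolynomial.induction_on with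
  | C c => simp [MvPolynomial.sumToIter_C]
  | add p q hp hq => simp [map_add, hp, hq]
  | mul_X p i hp =>
    cases i with
    | inl b => simp [_root_.map_mul, MvPolynomial.sumToIter_Xl, hp]
    | inr c => simp [_root_.map_mul, MvPolynomial.sumToIter_Xr, hp]

lemma sumToIter_ne_zero {ι ι' : Type*} {r : MvPolynomial (ι ⊕ ι') 𝕂} (hr : r ≠ 0) :
    MvPolynomial.sumToIter 𝕂 ι ι' r ≠ 0 := by
  intro h
  apply hr
  have e : ∀ r' : MvPolynomial (ι ⊕ ι') 𝕂,
      (MvPolynomial.sumRingEquiv 𝕂 ι ι') r' = MvPolynomial.sumToIter 𝕂 ι ι' r' := by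
    intro r'
    induction r' using MvPolynomial.induction_on with
    | C a => simp [MvPolynomial.sumToIter_C]
    | add p q hp hq => simp [map_add, hp, hq]
    | mul_X p i hp =>
      cases i <;> simp [_root_.map_mul, MvPolynomial.sumToIter_Xl, MvPolynomial.sumToIter_Xr, hp]
  have : (MvPolynomial.sumRingEquiv 𝕂 ι ι') r = 0 := (e r).trans h
  simpa using (MvPolynomial.sumRingEquiv 𝕂 ι ι').injective (this.trans (map_zero _).symm)

lemma mv_zero_set_null_mat : ∀ (n : ℕ) {m : ℕ} (p : MvPolynomial (Fin n × Fin m) 𝕂), p ≠ 0 →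
    volume {x : Fin n → Fin m → 𝕂 | MvPolynomial.eval (fun q => x q.1 q.2) p = 0} = 0 := by
  intro n
  induction n with
  | zero =>
    intro m p hp
    obtain ⟨c, rfl⟩ := MvPolynomial.C_surjective (Fin 0 × Fin m) p
    have hc : c ≠ 0 := fun h => hp (by simp [h])
    have h0 : {x : Fin 0 → Fin m → 𝕂 |
        MvPolynomial.eval (fun q : Fin 0 × Fin m => x q.1 q.2) (MvPolynomial.C c) = 0} = (∅ : Set _) := by
      ext x; simpa using hc
    rw [h0, measure_empty]
  | succ n ih =>
    intro m p hp
    -- rename and iterate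
    set r := MvPolynomial.rename (rowSplit n m) p with hrdef
    have hr : r ≠ 0 := fun h => hp ((MvPolynomial.rename_injective _ (rowSplit n m).injective)
      (by simpa using h))
    set q := MvPolynomial.sumToIter 𝕂 (Fin m) (Fin n × Fin m) r with hqdef
    have hq : q ≠ 0 := sumToIter_ne_zero hr
    obtain ⟨d0, hd0⟩ := MvPolynomial.ne_zero_iff.1 hq
    -- the product set
    set s : Set ((Fin n → Fin m → 𝕂) × (Fin m → 𝕂)) :=
      {z | MvPolynomial.eval (fun q : Fin (n+1) × Fin m => (Fin.cons z.2 z.1 : Fin (n+1) → Fin m → 𝕂) q.1 q.2) p = 0}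
        with hsdef
    have mcons : Measurable (fun z : (Fin n → Fin m → 𝕂) × (Fin m → 𝕂) =>
        (fun q : Fin (n+1) × Fin m => (Fin.cons z.2 z.1 : Fin (n+1) → Fin m → 𝕂) q.1 q.2)) := by
      refine measurable_pi_iff.2 fun ⟨i, k⟩ => ?_
      refine Fin.cases ?_ (fun j => ?_) i
      · simp only [Fin.cons_zero]; exact (measurable_pi_apply k).comp measurable_snd
      · show Measurable fun z : (Fin n → Fin m → 𝕂) × (Fin m → 𝕂) =>
            (Fin.cons z.2 z.1 : Fin (n+1) → Fin m → 𝕂) j.succ k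
        simp only [Fin.cons_succ]
        exact (measurable_pi_apply k).comp ((measurable_pi_apply j).comp measurable_fst)
    have hs : MeasurableSet s :=
      ((measurable_mv_eval p).comp mcons) (MeasurableSet.singleton 0)
    -- key computation via the measurable equiv
    have h2 : (MeasurableEquiv.piFinSuccAbove (fun _ : Fin (n+1) => (Fin m → 𝕂)) 0) ⁻¹'
        (Prod.swap ⁻¹' s) = {x : Fin (n+1) → Fin m → 𝕂 |
          MvPolynomial.eval (fun q => x q.1 q.2) p = 0} := by
      ext x
      simp only [Set.mem_preimage, MeasurableEquiv.piFinSuccAbove_apply, Fin.insertNthEquiv,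
        Equiv.coe_fn_symm_mk, Prod.swap, hsdef, Set.mem_setOf_eq, Fin.removeNth_zero,
        Fin.cons_self_tail]
    have key : volume {x : Fin (n+1) → Fin m → 𝕂 | MvPolynomial.eval (fun q => x q.1 q.2) p = 0}
        = ((volume : Measure (Fin n → Fin m → 𝕂)).prod (volume : Measure (Fin m → 𝕂))) s := by
      have h1 := measurePreserving_piFinSuccAbove
        (fun _ : Fin (n+1) => (volume : Measure (Fin m → 𝕂))) 0
      have e0 : (volume : Measure (Fin (n+1) → Fin m → 𝕂))
          = Measure.pi (fun _ => volume) := volume_pi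
      have e1 : (volume : Measure (Fin n → Fin m → 𝕂))
          = Measure.pi (fun _ => volume) := volume_pi
      calc volume {x : Fin (n+1) → Fin m → 𝕂 | MvPolynomial.eval (fun q => x q.1 q.2) p = 0}
          = Measure.pi (fun _ : Fin (n+1) => (volume : Measure (Fin m → 𝕂)))
            ((MeasurableEquiv.piFinSuccAbove (fun _ : Fin (n+1) => (Fin m → 𝕂)) 0) ⁻¹'
              (Prod.swap ⁻¹' s)) := by rw [← e0, h2]
        _ = ((volume : Measure (Fin m → 𝕂)).prod
              (Measure.pi fun _ : Fin n => (volume : Measure (Fin m → 𝕂))))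
              (Prod.swap ⁻¹' s) :=
            h1.measure_preimage ((measurable_swap hs).nullMeasurableSet)
        _ = ((Measure.pi fun _ : Fin n => (volume : Measure (Fin m → 𝕂))).prod
              (volume : Measure (Fin m → 𝕂))) s := by
            rw [← Measure.prod_swap, Measure.map_apply measurable_swap (measurable_swap hs),
              Set.preimage_preimage]
            simp
        _ = ((volume : Measure (Fin n → Fin m → 𝕂)).prod (volume : Measure (Fin m → 𝕂))) s := by
            rw [← e1]
    rw [key, Measure.measure_prod_null hs]
    have hnull := ih (MvPolynomial.coeff d0 q) hd0
    have hae : ∀ᵐ (y : Fin n → Fin m → 𝕂) ∂(volume : Measure (Fin n → Fin m → 𝕂)),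
        MvPolynomial.eval (fun q' => y q'.1 q'.2) (MvPolynomial.coeff d0 q) ≠ 0 := by
      rw [ae_iff]
      simpa using hnull
    filter_upwards [hae] with y hy
    set Y : Fin n × Fin m → 𝕂 := fun q' => y q'.1 q'.2 with hYdef
    have hmap : MvPolynomial.map (MvPolynomial.eval Y) q ≠ 0 := by
      intro h
      apply hy
      have h2' : MvPolynomial.coeff d0 (MvPolynomial.map (MvPolynomial.eval Y) q) = 0 := by
        rw [h]; simp
      rwa [MvPolynomial.coeff_map] at h2'
    have hsl : (Prod.mk y ⁻¹' s) = {a : Fin m → 𝕂 |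
        MvPolynomial.eval a (MvPolynomial.map (MvPolynomial.eval Y) q) = 0} := by
      ext a
      simp only [Set.mem_preimage, hsdef, Set.mem_setOf_eq]
      rw [← eval_sumToIter (𝕂 := 𝕂) r a Y, hrdef, MvPolynomial.eval_rename]
      have : (Sum.elim a Y ∘ (rowSplit n m)) = (fun q : Fin (n+1) × Fin m =>
          (Fin.cons a y : Fin (n+1) → Fin m → 𝕂) q.1 q.2) := by
        funext ⟨i, k⟩
        induction i using Fin.cases <;> simp [rowSplit, hYdef]
      rw [this]
    simp only [Pi.zero_apply]
    rw [hsl]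
    -- now use the m-variable lemma, after transporting along `Fin m`
    exact mv_zero_set_null m _ hmap

end Aux

theorem generic_spark_complement_measure_zero {𝕂 : Type} [RCLike 𝕂]
    [MeasureSpace 𝕂] [BorelSpace 𝕂] [SigmaFinite (volume : Measure 𝕂)]
    [(volume : Measure 𝕂).IsAddHaarMeasure] {n m : ℕ}
    (hn : 1 ≤ n) (hnm : n ≤ m) :
    volume {Φ : Matrix (Fin n) (Fin m) 𝕂 | ∀ j : Fin n, spark (deleteRow Φ j) = n}ᶜ
      = 0 := by
  obtain ⟨d, rfl⟩ : ∃ d, n = d + 1 := ⟨n - 1, (Nat.succ_pred_eq_of_pos hn).symm⟩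
  set P : Fin (d+1) → (Fin d → Fin m) → MvPolynomial (Fin (d+1) × Fin m) 𝕂 :=
    fun j c => (Matrix.of fun a b : Fin d =>
      MvPolynomial.X (R := 𝕂) (j.succAbove a, c b)).det with hP
  have hPne : ∀ (j : Fin (d+1)) (c : Fin d → Fin m), Function.Injective c → P j c ≠ 0 := by
    intro j c hc h
    set x : Fin (d+1) × Fin m → 𝕂 :=
      fun q => if ∃ a, q = (j.succAbove a, c a) then 1 else 0 with hx
    have h1 : MvPolynomial.eval x (P j c) = 1 := by
      rw [hP, RingHom.map_det, RingHom.mapMatrix_apply]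
      have hm : (Matrix.of fun a b : Fin d =>
          MvPolynomial.X (R := 𝕂) (j.succAbove a, c b)).map (MvPolynomial.eval x)
          = (1 : Matrix (Fin d) (Fin d) 𝕂) := by
        ext a b
        simp only [Matrix.map_apply, Matrix.of_apply, MvPolynomial.eval_X, Matrix.one_apply, hx]
        by_cases hab : a = b
        · subst hab; rw [if_pos rfl, if_pos ⟨a, rfl⟩]
        · rw [if_neg hab, if_neg]
          rintro ⟨a', he⟩
          obtain ⟨h1, h2⟩ := Prod.mk.injEq _ _ _ _ ▸ he
          exact hab ((Fin.succAbove_right_injective h1).trans (hc h2).symm)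
      rw [hm, Matrix.det_one]
    rw [h] at h1
    simp at h1
  have hsub : {Φ : Matrix (Fin (d+1)) (Fin m) 𝕂 | ∀ j, spark (deleteRow Φ j) = d+1}ᶜ ⊆
      ⋃ (j : Fin (d+1)) (c : Fin d → Fin m) (_ : Function.Injective c),
        {Φ : Matrix (Fin (d+1)) (Fin m) 𝕂 |
          MvPolynomial.eval (fun q => Φ q.1 q.2) (P j c) = 0} := by
    intro Φ hΦ
    simp only [Set.mem_compl_iff, Set.mem_setOf_eq, not_forall] at hΦ
    obtain ⟨j, hj⟩ := hΦ
    unfold spark at hj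
    set M := deleteRow Φ j with hM
    set A := {c | ∃ S : Finset (Fin m), S.card = c ∧
        ¬ LinearIndependent 𝕂 (fun i : S => fun r => M r (i : Fin m))} with hA
    have hcard_sub : Fintype.card {i : Fin (d+1) // i ≠ j} = d := by
      rw [Fintype.card_congr (finSuccAboveEquiv j).symm, Fintype.card_fin]
    have hfinrank : Module.finrank 𝕂 ({i : Fin (d+1) // i ≠ j} → 𝕂) = d := by
      rw [Module.finrank_fintype_fun_eq_card, hcard_sub]
    have hmem : (d+1) ∈ A := by
      obtain ⟨S, -, hS⟩ := Finset.exists_subset_card_eq (s := (Finset.univ : Finset (Fin m))) (n := d+1)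
        (by simpa using hnm)
      refine ⟨S, hS, fun hli => ?_⟩
      have hcle := hli.fintype_card_le_finrank
      rw [Fintype.card_coe, hS, hfinrank] at hcle
      omega
    have hlt : sInf (insert (m+1) A) < d + 1 :=
      lt_of_le_of_ne (Nat.sInf_le (Set.mem_insert_of_mem _ hmem)) hj
    have hmemInf : sInf (insert (m+1) A) ∈ insert (m+1) A :=
      Nat.sInf_mem ⟨m+1, Set.mem_insert _ _⟩
    have hinA : sInf (insert (m+1) A) ∈ A := by
      rcases Set.mem_insert_iff.1 hmemInf with h | h
      · omega
      · exact h
    obtain ⟨S, hScard, hSdep⟩ := hinA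
    have hSle : S.card ≤ d := by omega
    obtain ⟨T, hST, hTcard⟩ := Finset.exists_superset_card_eq hSle (by simpa using hnm.trans' (Nat.le_succ d))
    have hTdep : ¬ LinearIndependent 𝕂 (fun i : T => fun r => M r (i : Fin m)) := by
      intro hli
      exact hSdep (hli.comp (fun i : S => (⟨i.1, hST i.2⟩ : T))
        (fun a b h => Subtype.ext (by simpa using congrArg Subtype.val h)))
    set c : Fin d → Fin m := fun b => ((T.orderIsoOfFin hTcard) b : Fin m) with hcdef
    have hcinj : Function.Injective c :=
      fun a b h => (T.orderIsoOfFin hTcard).injective (Subtype.ext h)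
    refine Set.mem_iUnion.2 ⟨j, Set.mem_iUnion.2 ⟨c, Set.mem_iUnion.2 ⟨hcinj, ?_⟩⟩⟩
    by_contra hne
    apply hTdep
    have hdet : (Matrix.of fun a b : Fin d => Φ (j.succAbove a) (c b)).det ≠ 0 := by
      intro h0
      apply hne
      show MvPolynomial.eval (fun q => Φ q.1 q.2) (P j c) = 0
      rw [hP, RingHom.map_det, RingHom.mapMatrix_apply]
      have hm : (Matrix.of fun a b : Fin d =>
          MvPolynomial.X (R := 𝕂) (j.succAbove a, c b)).map
            (MvPolynomial.eval (fun q => Φ q.1 q.2))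
          = Matrix.of fun a b : Fin d => Φ (j.succAbove a) (c b) := by
        ext a b
        simp [Matrix.map_apply]
      rw [hm, h0]
    have hunit : IsUnit (Matrix.of fun a b : Fin d => Φ (j.succAbove a) (c b)) :=
      (Matrix.isUnit_iff_isUnit_det _).2 (isUnit_iff_ne_zero.2 hdet)
    have hli := Matrix.linearIndependent_cols_iff_isUnit.2 hunit
    set L : (Fin d → 𝕂) →ₗ[𝕂] ({i : Fin (d+1) // i ≠ j} → 𝕂) :=
      LinearMap.funLeft 𝕂 𝕂 (fun i => (finSuccAboveEquiv j).symm i) with hLdef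
    have hLinj : Function.Injective L :=
      LinearMap.funLeft_injective_of_surjective 𝕂 𝕂 _ ((finSuccAboveEquiv j).symm.surjective)
    have hli2 := hli.map' L (LinearMap.ker_eq_bot.2 hLinj)
    have hident : (⇑L ∘ fun b =>
        (Matrix.of fun a b : Fin d => Φ (j.succAbove a) (c b))ᵀ b)
        = fun b : Fin d => (fun r : {i : Fin (d+1) // i ≠ j} => M r (c b)) := by
      funext b
      funext r
      simp only [Function.comp_apply, hLdef, LinearMap.funLeft_apply, Matrix.transpose_apply,
        Matrix.of_apply]
      have hsr : j.succAbove ((finSuccAboveEquiv j).symm r) = r.1 := by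
        conv_rhs => rw [← (finSuccAboveEquiv j).apply_symm_apply r]
        rw [finSuccAboveEquiv_apply]
      rw [hsr]
      rfl
    replace hli2 : LinearIndependent 𝕂 (⇑L ∘ fun b =>
        (Matrix.of fun a b : Fin d => Φ (j.succAbove a) (c b))ᵀ b) := hli2
    rw [hident] at hli2
    exact (linearIndependent_equiv (T.orderIsoOfFin hTcard).toEquiv).1 hli2
  refine measure_mono_null hsub ?_
  refine measure_iUnion_null fun j => measure_iUnion_null fun c =>
    measure_iUnion_null fun hc => ?_
  exact mv_zero_set_null_mat (d+1) (P j c) (hPne j c hc)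
end

section
/- Let Φ be a frame for 𝕂^n with m vectors and lower frame bound A (i.e., A is the smallest eigenvalue of the frame operator Φ Φ*). If m ≥ 2n, then for every real c ≥ 1/A there exists a tight dual frame Ψ of Φ with frame bound c, i.e., a matrix Ψ ∈ 𝕂^{n×m} with Ψ Φ* = I_n and Ψ Ψ* = c·I_n. -/
open Matrix Polynomial
open Module

/-- Evaluating the characteristic polynomial at a scalar gives a determinant. -/
lemma my_eval_charpoly {R : Type*} [CommRing R] {k : Type*} [Fintype k] [DecidableEq k]
    (M : Matrix k k R) (r : R) :
    M.charpoly.eval r = (Matrix.diagonal (fun _ => r) - M).det := by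
  rw [Matrix.charpoly, ← Polynomial.coe_evalRingHom, RingHom.map_det]
  congr 1
  ext i j
  by_cases h : i = j <;>
    simp [Matrix.charmatrix_apply, Matrix.diagonal_apply, h]

/-- Each eigenvalue of a Hermitian matrix whose charpoly factors as `∏ (X - σᵢ²)`
is one of the `σⱼ²`. -/
lemma my_eigenvalue_eq {𝕂 : Type} [RCLike 𝕂] {n : ℕ} (S : Matrix (Fin n) (Fin n) 𝕂)
    (hH : S.IsHermitian) (σ : Fin n → ℝ)
    (hchar : S.charpoly = ∏ i : Fin n, (X - C ((σ i : 𝕂) ^ 2)))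
    (i : Fin n) : ∃ j, hH.eigenvalues i = σ j ^ 2 := by
  have hvec := hH.mulVec_eigenvectorBasis i
  have hne : (⇑(hH.eigenvectorBasis i) : Fin n → 𝕂) ≠ 0 := by
    intro h
    have h1 := hH.eigenvectorBasis.orthonormal.1 i
    rw [show (hH.eigenvectorBasis i : EuclideanSpace 𝕂 (Fin n)) = 0 from
      by ext k; simpa using congrFun h k] at h1
    simp at h1
  have hdet : (Matrix.diagonal (fun _ => ((hH.eigenvalues i : ℝ) : 𝕂)) - S).det = 0 := by
    rw [← Matrix.exists_mulVec_eq_zero_iff]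
    refine ⟨_, hne, ?_⟩
    rw [Matrix.sub_mulVec, hvec]
    ext k
    simp only [Matrix.mulVec_diagonal, Pi.sub_apply, Pi.smul_apply, Pi.zero_apply,
      RCLike.real_smul_eq_coe_mul, sub_self]
  have he : (S.charpoly.eval ((hH.eigenvalues i : ℝ) : 𝕂)) = 0 := by
    rw [my_eval_charpoly]; exact hdet
  rw [hchar] at he
  simp only [Polynomial.eval_prod, Polynomial.eval_sub, Polynomial.eval_X,
    Polynomial.eval_C] at he
  obtain ⟨j, -, hj⟩ := Finset.prod_eq_zero_iff.mp he
  refine ⟨j, ?_⟩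
  have h5 : ((hH.eigenvalues i : ℝ) : 𝕂) = ((σ j ^ 2 : ℝ) : 𝕂) := by
    rw [sub_eq_zero] at hj
    rw [hj]; push_cast; ring
  exact_mod_cast h5

/-- An orthonormal family of `n` vectors in the kernel of a rank-`n` matrix with
`m ≥ 2n` columns. -/
lemma my_kernel_vectors {𝕂 : Type} [RCLike 𝕂] {n m : ℕ} (hm : 2 * n ≤ m)
    (Φ : Matrix (Fin n) (Fin m) 𝕂) (hΦ : Φ.rank = n) :
    ∃ v : Fin n → (Fin m → 𝕂),
      (∀ i, Φ *ᵥ v i = 0) ∧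
      (∀ i j, ∑ k, (starRingEnd 𝕂) (v i k) * v j k = if i = j then 1 else 0) := by
  set f := Matrix.toEuclideanLin Φ with hf
  have hrange : finrank 𝕂 (LinearMap.range f) = n := by
    rw [hf, Matrix.toEuclideanLin_eq_toLin, ← Matrix.rank_eq_finrank_range_toLin, hΦ]
  have hdim : n ≤ finrank 𝕂 (LinearMap.ker f) := by
    have h := LinearMap.finrank_range_add_finrank_ker f
    rw [hrange] at h
    have h2 : finrank 𝕂 (EuclideanSpace 𝕂 (Fin m)) = m := by
      simp [finrank_euclideanSpace]
    omega
  set b := stdOrthonormalBasis 𝕂 (LinearMap.ker f) with hb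
  refine ⟨fun i => (b (Fin.castLE hdim i) : EuclideanSpace 𝕂 (Fin m)), fun i => ?_, fun i j => ?_⟩
  · have h' : Matrix.toEuclideanLin Φ ↑(b (Fin.castLE hdim i)) = 0 :=
      LinearMap.mem_ker.mp (b (Fin.castLE hdim i)).2
    have h2 := congrArg (WithLp.equiv 2 (Fin n → 𝕂)) h'
    rw [WithLp.equiv_apply, Matrix.piLp_ofLp_toEuclideanLin, Matrix.toLin'_apply] at h2
    simpa using h2
  · have horth := b.orthonormal
    rw [orthonormal_iff_ite] at horth
    have := horth (Fin.castLE hdim i) (Fin.castLE hdim j)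
    have hsum : ∑ k, (starRingEnd 𝕂) ((b (Fin.castLE hdim i) : EuclideanSpace 𝕂 (Fin m)) k) *
        (b (Fin.castLE hdim j) : EuclideanSpace 𝕂 (Fin m)) k =
        (inner 𝕂 ((b (Fin.castLE hdim i) : EuclideanSpace 𝕂 (Fin m)))
          ((b (Fin.castLE hdim j) : EuclideanSpace 𝕂 (Fin m))) : 𝕂) := by
      simp [PiLp.inner_apply, RCLike.inner_apply, mul_comm]
    rw [Submodule.coe_inner] at this
    rw [hsum, this]
    simp [Fin.castLE_inj]


/-- `σ : Fin n → ℝ` is the non-increasingly ordered sequence of singular values of the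
`n × m` matrix `Φ`: the `σ i` are positive, non-increasing, and their squares are the
eigenvalues (with multiplicity) of `Φ Φ*`, encoded via the characteristic polynomial. -/
def HasSingularValues {𝕂 : Type} [RCLike 𝕂] {n m : ℕ}
    (Φ : Matrix (Fin n) (Fin m) 𝕂) (σ : Fin n → ℝ) : Prop :=
  Antitone σ ∧ (∀ i, 0 < σ i) ∧
    (Φ * Φᴴ).charpoly = ∏ i : Fin n, (X - C ((σ i : 𝕂) ^ 2))

/-- Let `Φ` be a frame for `𝕂^n` with `m ≥ 2n` vectors and lower
frame bound `A` (the smallest eigenvalue of `Φ Φ*`, i.e. `A = σ_n²`). Then for every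
`c ≥ 1/A` there is a tight dual frame `Ψ` of `Φ` with frame bound `c`, i.e.
`Ψ Φ* = I_n` and `Ψ Ψ* = c·I_n`. -/
theorem exists_tight_dual_of_two_n_le {𝕂 : Type} [RCLike 𝕂] {n m : ℕ}
    (hn : 1 ≤ n) (hm : 2 * n ≤ m)
    (Φ : Matrix (Fin n) (Fin m) 𝕂) (hΦ : Φ.rank = n)
    (σ : Fin n → ℝ) (hσ : HasSingularValues Φ σ)
    (A : ℝ) (hA : A = σ ⟨n - 1, by omega⟩ ^ 2)
    (c : ℝ) (hc : 1 / A ≤ c) :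
    ∃ Ψ : Matrix (Fin n) (Fin m) 𝕂,
      Ψ * Φᴴ = 1 ∧ Ψ * Ψᴴ = (c : 𝕂) • (1 : Matrix (Fin n) (Fin n) 𝕂) := by
  obtain ⟨hmono, hpos, hchar⟩ := hσ
  have hH : (Φ * Φᴴ).IsHermitian := isHermitian_mul_conjTranspose_self Φ
  set U : Matrix (Fin n) (Fin n) 𝕂 := ↑hH.eigenvectorUnitary with hU
  set μ : Fin n → ℝ := hH.eigenvalues with hμdef
  have hU1 : U * star U = 1 := Unitary.coe_mul_star_self _
  have hU2 : star U * U = 1 := Unitary.coe_star_mul_self _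
  have hspec : Φ * Φᴴ = U * diagonal (RCLike.ofReal ∘ μ) * star U := hH.spectral_theorem
  -- eigenvalue bounds
  have hApos : 0 < A := by rw [hA]; exact pow_pos (hpos _) 2
  have hμA : ∀ i, A ≤ μ i := by
    intro i
    obtain ⟨j, hj⟩ := my_eigenvalue_eq (Φ * Φᴴ) hH σ hchar i
    rw [hμdef, hj, hA]
    have hjle : j ≤ (⟨n - 1, by omega⟩ : Fin n) := by
      rw [Fin.le_def]
      simp only [Fin.val_mk]
      have := j.2
      omega
    exact pow_le_pow_left₀ (le_of_lt (hpos _)) (hmono hjle) 2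
  have hμpos : ∀ i, 0 < μ i := fun i => lt_of_lt_of_le hApos (hμA i)
  have hcpos : 0 < c := lt_of_lt_of_le (by positivity) hc
  have hinv_le : ∀ i, (μ i)⁻¹ ≤ c := by
    intro i
    calc (μ i)⁻¹ ≤ A⁻¹ := inv_anti₀ hApos (hμA i)
    _ = 1 / A := (one_div A).symm
    _ ≤ c := hc
  -- conjugated diagonal matrices
  set D : (Fin n → ℝ) → Matrix (Fin n) (Fin n) 𝕂 :=
    fun d => U * diagonal (fun i => ((d i : ℝ) : 𝕂)) * star U with hD
  have hDapp : ∀ d : Fin n → ℝ, D d = U * diagonal (fun i => ((d i : ℝ) : 𝕂)) * star U :=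
    fun d => rfl
  have hDmul : ∀ d e : Fin n → ℝ, D d * D e = D (fun i => d i * e i) := by
    intro d e
    rw [hDapp, hDapp, hDapp]
    simp only [Matrix.mul_assoc]
    rw [← Matrix.mul_assoc (star U) U, hU2, Matrix.one_mul,
      ← Matrix.mul_assoc (diagonal _) (diagonal _), diagonal_mul_diagonal]
    push_cast
    rfl
  have hDherm : ∀ d : Fin n → ℝ, (D d)ᴴ = D d := by
    intro d
    have hdstar : (diagonal (fun i => ((d i : ℝ) : 𝕂)))ᴴ = diagonal (fun i => ((d i : ℝ) : 𝕂)) := by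
      have hsf : (star fun i => ((d i : ℝ) : 𝕂)) = fun i => ((d i : ℝ) : 𝕂) := by
        funext i
        simp [Pi.star_apply, RCLike.conj_ofReal]
      rw [diagonal_conjTranspose, hsf]
    rw [hDapp, Matrix.conjTranspose_mul, Matrix.conjTranspose_mul, hdstar,
      ← Matrix.star_eq_conjTranspose, ← Matrix.star_eq_conjTranspose, star_star,
      Matrix.mul_assoc]
  have hD1 : D (fun _ => (1 : ℝ)) = 1 := by
    rw [hDapp]
    simp only [RCLike.ofReal_one]
    rw [Matrix.diagonal_one, Matrix.mul_one, hU1]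
  have hDc : D (fun _ => c) = (c : 𝕂) • 1 := by
    rw [hDapp]
    have h1 : (diagonal (fun _ : Fin n => ((c : ℝ) : 𝕂))) =
        (c : 𝕂) • (1 : Matrix (Fin n) (Fin n) 𝕂) := by
      ext i j
      by_cases h : i = j <;> simp [Matrix.diagonal_apply, Matrix.one_apply, h]
    rw [h1, Matrix.mul_smul, Matrix.mul_one, Matrix.smul_mul, hU1]
  have hDadd : ∀ d e : Fin n → ℝ, D d + D e = D (fun i => d i + e i) := by
    intro d e
    rw [hDapp, hDapp, hDapp, ← Matrix.add_mul, ← Matrix.mul_add, Matrix.diagonal_add]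
    congr 2
    funext i
    push_cast
    rfl
  set T := D (fun i => (μ i)⁻¹) with hT
  set B := D (fun i => Real.sqrt (c - (μ i)⁻¹)) with hB
  have hTS : T * (Φ * Φᴴ) = 1 := by
    rw [hspec, hT]
    have hs : U * diagonal (RCLike.ofReal ∘ μ) * star U = D μ := rfl
    rw [hs, hDmul]
    have h9 : (fun i => (μ i)⁻¹ * μ i) = fun _ => (1 : ℝ) := by
      funext i; exact inv_mul_cancel₀ (ne_of_gt (hμpos i))
    rw [h9, hD1]
  have hBB : B * B = D (fun i => c - (μ i)⁻¹) := by
    have harg : (fun i => Real.sqrt (c - (μ i)⁻¹) * Real.sqrt (c - (μ i)⁻¹)) =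
        fun i => c - (μ i)⁻¹ := by
      funext i
      exact Real.mul_self_sqrt (by linarith [hinv_le i])
    rw [hB, hDmul, harg]
  -- kernel vectors
  obtain ⟨v, hv0, hvorth⟩ := my_kernel_vectors hm Φ hΦ
  set Q : Matrix (Fin n) (Fin m) 𝕂 := fun i k => (starRingEnd 𝕂) (v i k) with hQ
  have hQΦ : Q * Φᴴ = 0 := by
    ext i j
    have h0 : (Φ *ᵥ v i) j = 0 := congrFun (hv0 i) j
    simp only [Matrix.mul_apply, Matrix.conjTranspose_apply, hQ, Matrix.zero_apply]
    calc ∑ k, (starRingEnd 𝕂) (v i k) * (starRingEnd 𝕂) (Φ j k)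
        = (starRingEnd 𝕂) (∑ k, Φ j k * v i k) := by
          rw [map_sum]
          congr 1
          funext k
          rw [RingHom.map_mul]
          ring
      _ = 0 := by rw [show ∑ k, Φ j k * v i k = 0 from h0]; simp
  have hΦQ : Φ * Qᴴ = 0 := by
    have h2 := congrArg Matrix.conjTranspose hQΦ
    rwa [Matrix.conjTranspose_mul, Matrix.conjTranspose_conjTranspose,
      Matrix.conjTranspose_zero] at h2
  have hQQ : Q * Qᴴ = 1 := by
    ext i j
    simp only [Matrix.mul_apply, Matrix.conjTranspose_apply, hQ, Matrix.one_apply]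
    calc ∑ k, (starRingEnd 𝕂) (v i k) * (starRingEnd 𝕂) ((starRingEnd 𝕂) (v j k))
        = ∑ k, (starRingEnd 𝕂) (v i k) * v j k := by
          congr 1
          funext k
          rw [RCLike.conj_conj]
      _ = if i = j then 1 else 0 := hvorth i j
  have hTherm : Tᴴ = T := by rw [hT]; exact hDherm _
  have hBherm : Bᴴ = B := by rw [hB]; exact hDherm _
  refine ⟨T * Φ + B * Q, ?_, ?_⟩
  · rw [Matrix.add_mul, Matrix.mul_assoc T Φ Φᴴ, Matrix.mul_assoc B Q Φᴴ, hQΦ,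
      Matrix.mul_zero, add_zero, hTS]
  · rw [Matrix.conjTranspose_add, Matrix.conjTranspose_mul T Φ, Matrix.conjTranspose_mul B Q,
      hTherm, hBherm, Matrix.add_mul, Matrix.mul_add, Matrix.mul_add]
    have e1 : T * Φ * (Φᴴ * T) = T := by
      rw [Matrix.mul_assoc T Φ (Φᴴ * T), ← Matrix.mul_assoc Φ Φᴴ T,
        ← Matrix.mul_assoc T (Φ * Φᴴ) T, hTS, Matrix.one_mul]
    have e2 : T * Φ * (Qᴴ * B) = 0 := by
      rw [Matrix.mul_assoc T Φ (Qᴴ * B), ← Matrix.mul_assoc Φ Qᴴ B, hΦQ,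
        Matrix.zero_mul, Matrix.mul_zero]
    have e3 : B * Q * (Φᴴ * T) = 0 := by
      rw [Matrix.mul_assoc B Q (Φᴴ * T), ← Matrix.mul_assoc Q Φᴴ T, hQΦ,
        Matrix.zero_mul, Matrix.mul_zero]
    have e4 : B * Q * (Qᴴ * B) = B * B := by
      rw [Matrix.mul_assoc B Q (Qᴴ * B), ← Matrix.mul_assoc Q Qᴴ B, hQQ, Matrix.one_mul]
    rw [e1, e2, e3, e4, add_zero, zero_add, hBB, hT, hDadd]
    rw [show (fun i => (μ i)⁻¹ + (c - (μ i)⁻¹)) = fun _ => c from funext fun i => by ring]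
    exact hDc
end
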